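/- arXiv:1512.08476 — 3 statements merged into one kernel-verified Lean document; each statement's English description precedes it below -/
import Mathlib

section
/- Let T be a bounded linear operator on L² induced by a K⁰-kernel 𝐓 satisfying condition (iv), let {βₙ} be a complex sequence with βₙ → 0, and set λₙ(λ) = λ(1 − βₙλ)⁻¹. Then for every compact subset K̃ of ∇_s({βₙI + T̃ₙ}) and each fixed t ∈ ℝ, sup_{λ∈K̃} ‖𝐭′_{n|λₙ(λ)}(t) − 𝐭′_{|λ}(t)‖_{L²} → 0 as n → ∞ (the quantity being defined for all sufficiently large n). -/
open MeasureTheory Filter Topology ContinuousLinearMap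
open scoped ENNReal NNReal

noncomputable section

/-- `L²(ℝ)`, the complex Hilbert space of square-integrable functions on `ℝ`. -/
abbrev L2 : Type := MeasureTheory.Lp ℂ 2 (MeasureTheory.volume : MeasureTheory.Measure ℝ)

/-- Bounded linear operators on `L²`. -/
abbrev L2op : Type := L2 →L[ℂ] L2

/-- `T` is the integral operator induced by the kernel `K`:
`(Tf)(s) = ∫ K(s,t) f(t) dt` for every `f ∈ L²` and almost every `s`. -/
def IsInducedBy (T : L2op) (K : ℝ → ℝ → ℂ) : Prop :=
  ∀ f : L2, ∀ᵐ s : ℝ, (T f : ℝ → ℂ) s = ∫ t : ℝ, K s t * (f : ℝ → ℂ) t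

/-- `K` is a `K⁰`-kernel with associated Carleman functions `kt`, `kt'`:
`kt s = conj (K s ·)` and `kt' s = K · s` as elements of `L²`, the kernel is
continuous and vanishes at infinity, and both Carleman functions are continuous
and vanish at infinity in `L²`-norm. -/
structure IsK0Kernel (K : ℝ → ℝ → ℂ) (kt kt' : ℝ → L2) : Prop where
  repr_t : ∀ s : ℝ, (kt s : ℝ → ℂ) =ᵐ[volume] fun x => (starRingEnd ℂ) (K s x)
  repr_t' : ∀ s : ℝ, (kt' s : ℝ → ℂ) =ᵐ[volume] fun x => K x s
  cont : Continuous fun p : ℝ × ℝ => K p.1 p.2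
  vanish : Tendsto (fun p : ℝ × ℝ => K p.1 p.2) (cocompact (ℝ × ℝ)) (𝓝 0)
  cont_t : Continuous kt
  vanish_t : Tendsto kt (cocompact ℝ) (𝓝 0)
  cont_t' : Continuous kt'
  vanish_t' : Tendsto kt' (cocompact ℝ) (𝓝 0)

/-- The set `Π(T)` of regular values of `T`: those `λ` for which `I - λT` is invertible. -/
def regularSet (T : L2op) : Set ℂ := {lam : ℂ | IsUnit (1 - lam • T)}

/-- The resolvent `R_λ(T) = (I - λT)⁻¹` (junk value `0` if `λ ∉ Π(T)`). -/
def res (T : L2op) (lam : ℂ) : L2op := Ring.inverse (1 - lam • T)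

/-- The Fredholm resolvent `T_{|λ} = T R_λ(T)`. -/
def fres (T : L2op) (lam : ℂ) : L2op := T * res T lam

/-- The region of boundedness `∇_b({Sₙ})`. -/
def nablaB (S : ℕ → L2op) : Set ℂ :=
  {ζ : ℂ | ζ ≠ 0 ∧ ∃ M : ℝ, 0 < M ∧ ∃ N : ℕ, ∀ n > N,
      ζ ∈ regularSet (S n) ∧ ‖fres (S n) ζ‖ ≤ M}

/-- The region of strong convergence `∇_s({Sₙ})`: the `ζ ∈ ∇_b({Sₙ})` such that
the Fredholm resolvents `S_{n|ζ}` converge in the strong operator topology. -/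
def nablaS (S : ℕ → L2op) : Set ℂ :=
  {ζ : ℂ | ζ ∈ nablaB S ∧
    ∀ f : L2, ∃ g : L2, Tendsto (fun n => fres (S n) ζ f) atTop (𝓝 g)}

/-- Nuclear (trace class) operator on `L²`. -/
def IsNuclear (T : L2op) : Prop :=
  ∃ g h : ℕ → L2, Summable (fun k => ‖g k‖ * ‖h k‖) ∧
    ∀ f : L2, T f = ∑' k : ℕ, (inner ℂ f (g k) : ℂ) • h k

/-- The characteristic function `χ` of the interval `(-τ, τ)`, with complex values. -/
def chi (t : ℝ) (x : ℝ) : ℂ := Set.indicator (Set.Ioo (-t) t) 1 x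

/-- Condition (iv) for a `K⁰`-kernel `K` inducing `T`: the positive reals `τ n`
strictly increase to `+∞`, `P n` is the orthogonal projection given by multiplication
by `χₙ = chi (τ n)`, the subkernels `Kₙ(s,t) = χₙ(s)K(s,t)` and
`K̃ₙ(s,t) = χₙ(s)K(s,t)χₙ(t)` are `K⁰`-kernels, and the induced operators
`Tₙ = PₙT` and `T̃ₙ = PₙTPₙ` are nuclear. -/
structure ConditionIV (K : ℝ → ℝ → ℂ) (T : L2op) (tau : ℕ → ℝ) (P : ℕ → L2op) : Prop where
  pos : ∀ n, 0 < tau n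
  mono : StrictMono tau
  tendsto_top : Tendsto tau atTop atTop
  proj : ∀ n, ∀ f : L2, (P n f : ℝ → ℂ) =ᵐ[volume] fun x => chi (tau n) x * (f : ℝ → ℂ) x
  subker : ∀ n, ∃ kt kt' : ℝ → L2, IsK0Kernel (fun s t => chi (tau n) s * K s t) kt kt'
  subker' : ∀ n, ∃ kt kt' : ℝ → L2,
      IsK0Kernel (fun s t => chi (tau n) s * K s t * chi (tau n) t) kt kt'
  nuclear : ∀ n, IsNuclear (P n * T)
  nuclear' : ∀ n, IsNuclear (P n * T * P n)

/-- `λₙ(λ) = λ(1 - βₙλ)⁻¹`. -/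
def lamn (b : ℕ → ℂ) (lam : ℂ) (n : ℕ) : ℂ := lam * (1 - b n * lam)⁻¹

/-- The resolvent kernel for `K` at `λ` built from the resolvent Carleman function
`𝐭'_{|λ}(t) = R_λ(T)(kt' t)`:  `𝐓_{|λ}(s,t) = λ⟨𝐭'_{|λ}(t), 𝐭(s)⟩ + 𝐓(s,t)`
(the paper's inner product `⟨a,b⟩ = ∫ a conj b` is `inner b a` in Mathlib). -/
def resKer (T : L2op) (K : ℝ → ℝ → ℂ) (kt kt' : ℝ → L2) (lam : ℂ) (s t : ℝ) : ℂ :=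
  lam * (inner ℂ (kt s) (res T lam (kt' t)) : ℂ) + K s t

/-- The resolvent kernel for the subkernel `Kₙ` at `λ`:
`𝐓_{n|λ}(s,t) = λ χₙ(s) ⟨𝐭'_{n|λ}(t), 𝐭(s)⟩ + 𝐓ₙ(s,t)`, where
`𝐭'_{n|λ}(t) = R_λ(Tₙ) Pₙ (kt' t)` and `𝐓ₙ(s,t) = χₙ(s) 𝐓(s,t)`. -/
def resKerN (T : L2op) (K : ℝ → ℝ → ℂ) (kt kt' : ℝ → L2) (taun : ℝ) (Pn : L2op)
    (lam : ℂ) (s t : ℝ) : ℂ :=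
  lam * chi taun s * (inner ℂ (kt s) (res (Pn * T) lam (Pn (kt' t))) : ℂ) + chi taun s * K s t

/-- `R` is a resolvent kernel for the `K⁰`-kernel `K` at `λ` (Definition 2 of the paper):
`R` is a `K⁰`-kernel satisfying the two simultaneous integral equations and the
square-integrability condition. -/
def IsResolventKernel (K : ℝ → ℝ → ℂ) (lam : ℂ) (R : ℝ → ℝ → ℂ) : Prop :=
  (∃ rt rt' : ℝ → L2, IsK0Kernel R rt rt') ∧
  (∀ s t : ℝ, R s t - lam * ∫ x : ℝ, K s x * R x t = K s t) ∧
  (∀ s t : ℝ, R s t - lam * ∫ x : ℝ, R s x * K x t = K s t) ∧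
  (∀ f : L2, ∫⁻ s : ℝ, ((‖∫ t : ℝ, R s t * (f : ℝ → ℂ) t‖₊ : ℝ≥0) : ℝ≥0∞) ^ 2 < ⊤)


namespace CarlemanAux

lemma isUnit_and_inverse_eq {R : Type*} [Ring R] {x y : R}
    (h1 : x * y = 1) (h2 : y * x = 1) : IsUnit x ∧ Ring.inverse x = y := by
  have hu : IsUnit x := ⟨⟨x, y, h1, h2⟩, rfl⟩
  refine ⟨hu, ?_⟩
  calc Ring.inverse x = Ring.inverse x * (x * y) := by rw [h1, mul_one]
    _ = (Ring.inverse x * x) * y := by rw [mul_assoc]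
    _ = y := by rw [Ring.inverse_mul_cancel x hu, one_mul]

lemma inverse_mul {R : Type*} [Ring R] {a b : R} (ha : IsUnit a) (hb : IsUnit b) :
    IsUnit (a * b) ∧ Ring.inverse (a * b) = Ring.inverse b * Ring.inverse a := by
  apply isUnit_and_inverse_eq
  · calc a * b * (Ring.inverse b * Ring.inverse a)
        = a * (b * Ring.inverse b) * Ring.inverse a := by noncomm_ring
      _ = 1 := by rw [Ring.mul_inverse_cancel b hb, mul_one, Ring.mul_inverse_cancel a ha]
  · calc Ring.inverse b * Ring.inverse a * (a * b)
        = Ring.inverse b * (Ring.inverse a * a) * b := by noncomm_ring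
      _ = 1 := by rw [Ring.inverse_mul_cancel a ha, mul_one, Ring.inverse_mul_cancel b hb]

/-- Jacobson-style swap: if `1 - x*y` is a unit then so is `1 - y*x`, and
`(1 - y*x)⁻¹ * y = y * (1 - x*y)⁻¹`. -/
lemma swap_unit {R : Type*} [Ring R] {x y : R} (h : IsUnit (1 - x * y)) :
    IsUnit (1 - y * x) ∧
      Ring.inverse (1 - y * x) * y = y * Ring.inverse (1 - x * y) := by
  set u := Ring.inverse (1 - x * y) with hu
  have h1 : (1 - x * y) * u = 1 := Ring.mul_inverse_cancel _ h
  have h2 : u * (1 - x * y) = 1 := Ring.inverse_mul_cancel _ h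
  have e1 : x * y * u = u - 1 := by rw [← h1]; noncomm_ring
  have e2 : u * (x * y) = u - 1 := by rw [← h2]; noncomm_ring
  have hv1 : (1 - y * x) * (1 + y * u * x) = 1 := by
    have expand : (1 - y * x) * (1 + y * u * x) = 1 - y * x + y * u * x - y * (x * y * u) * x := by
      noncomm_ring
    rw [expand, e1]; noncomm_ring
  have hv2 : (1 + y * u * x) * (1 - y * x) = 1 := by
    have expand : (1 + y * u * x) * (1 - y * x) = 1 - y * x + y * u * x - y * (u * (x * y)) * x := by
      noncomm_ring
    rw [expand, e2]; noncomm_ring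
  obtain ⟨hu', hinv⟩ := isUnit_and_inverse_eq hv1 hv2
  refine ⟨hu', ?_⟩
  rw [hinv]
  have : (1 + y * u * x) * y = y + y * (u * (x * y)) := by noncomm_ring
  rw [this, e2]; noncomm_ring

variable {R : Type*} [Ring R] [Algebra ℂ R]

lemma inv_one_sub_smul_eq {S : R} {lam : ℂ} (h : IsUnit (1 - lam • S)) :
    Ring.inverse (1 - lam • S) = 1 + lam • (S * Ring.inverse (1 - lam • S)) := by
  set u := Ring.inverse (1 - lam • S) with hu
  have h1 : (1 - lam • S) * u = 1 := Ring.mul_inverse_cancel _ h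
  have : u - lam • (S * u) = 1 := by
    rw [← h1, sub_mul, one_mul, smul_mul_assoc]
  rw [← this]; abel

lemma inv_one_sub_smul_sub {S : R} {lam mu : ℂ}
    (hl : IsUnit (1 - lam • S)) (hm : IsUnit (1 - mu • S)) :
    Ring.inverse (1 - lam • S) - Ring.inverse (1 - mu • S) =
      (lam - mu) • (Ring.inverse (1 - lam • S) * S * Ring.inverse (1 - mu • S)) := by
  set a := Ring.inverse (1 - lam • S)
  set c := Ring.inverse (1 - mu • S)
  have h1 : a * ((1 - mu • S) * c) = a := by rw [Ring.mul_inverse_cancel _ hm, mul_one]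
  have h2 : (a * (1 - lam • S)) * c = c := by rw [Ring.inverse_mul_cancel _ hl, one_mul]
  calc a - c = a * ((1 - mu • S) * c) - (a * (1 - lam • S)) * c := by rw [h1, h2]
    _ = a * ((1 - mu • S) - (1 - lam • S)) * c := by noncomm_ring
    _ = a * ((lam - mu) • S) * c := by rw [sub_sub_sub_cancel_left, ← sub_smul]
    _ = (lam - mu) • (a * S * c) := by rw [mul_smul_comm, smul_mul_assoc]

lemma one_sub_smul_extend {S : R} {z0 z : ℂ} (h0 : IsUnit (1 - z0 • S)) :
    (1 - z0 • S) * (1 - (z - z0) • (S * Ring.inverse (1 - z0 • S))) = 1 - z • S := by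
  set u := Ring.inverse (1 - z0 • S) with hu
  have comm : (1 - z0 • S) * S = S * (1 - z0 • S) := by
    rw [sub_mul, mul_sub, one_mul, mul_one, smul_mul_assoc, mul_smul_comm]
  have key : (1 - z0 • S) * ((z - z0) • (S * u)) = (z - z0) • S := by
    rw [mul_smul_comm, ← mul_assoc, comm, mul_assoc, Ring.mul_inverse_cancel _ h0, mul_one]
  rw [mul_sub, mul_one, key, sub_sub, ← add_smul]
  ring_nf

lemma isUnit_smul_unit {U : R} {c : ℂ} (hc : c ≠ 0) (h : IsUnit U) :
    IsUnit (c • U) ∧ Ring.inverse (c • U) = c⁻¹ • Ring.inverse U := by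
  apply isUnit_and_inverse_eq
  · rw [smul_mul_smul_comm, mul_inv_cancel₀ hc, Ring.mul_inverse_cancel _ h, one_smul]
  · rw [smul_mul_smul_comm, inv_mul_cancel₀ hc, Ring.inverse_mul_cancel _ h, one_smul]

/-- The key scalar-shift identity: `1 - (λ d⁻¹) • A = d⁻¹ • (1 - λ • (b•1 + A))`
where `d = 1 - b λ`. -/
lemma one_sub_lamn_smul {A : R} {b lam : ℂ} (hd : 1 - b * lam ≠ 0) :
    1 - (lam * (1 - b * lam)⁻¹) • A =
      (1 - b * lam)⁻¹ • (1 - lam • (b • (1:R) + A)) := by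
  set d := 1 - b * lam with hdd
  have : 1 - lam • (b • (1:R) + A) = d • (1:R) - lam • A := by
    rw [smul_add, smul_smul]
    rw [hdd, sub_smul, one_smul]
    have : lam * b = b * lam := mul_comm _ _
    rw [this]
    abel
  rw [this, smul_sub, smul_smul, inv_mul_cancel₀ hd, one_smul, smul_smul]
  ring_nf

end CarlemanAux

namespace CarlemanAux

lemma norm_chi_le (t x : ℝ) : ‖chi t x‖ ≤ 1 := by
  unfold chi
  by_cases h : x ∈ Set.Ioo (-t) t <;> simp [h]

lemma chi_mul_chi (t x : ℝ) : chi t x * chi t x = chi t x := by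
  unfold chi
  by_cases h : x ∈ Set.Ioo (-t) t <;> simp [h]

lemma chi_mul_eq_self {g : ℝ → ℂ} {r τ : ℝ} (hsupp : tsupport g ⊆ Set.Ioo (-r) r)
    (hτ : r ≤ τ) (x : ℝ) : chi τ x * g x = g x := by
  by_cases h : x ∈ Set.Ioo (-τ) τ
  · unfold chi; simp [h]
  · have hx : x ∉ Set.Ioo (-r) r := by
      intro hx; exact h ⟨by linarith [hx.1], by linarith [hx.2]⟩
    have : g x = 0 := image_eq_zero_of_notMem_tsupport (fun hc => hx (hsupp hc))
    simp [this]

lemma P_apply_norm_le {Pn : L2op} {τ : ℝ}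
    (hP : ∀ f : L2, (Pn f : ℝ → ℂ) =ᵐ[volume] fun x => chi τ x * (f : ℝ → ℂ) x)
    (f : L2) : ‖Pn f‖ ≤ ‖f‖ := by
  rw [MeasureTheory.Lp.norm_def, MeasureTheory.Lp.norm_def]
  apply ENNReal.toReal_mono (MeasureTheory.Lp.eLpNorm_ne_top f)
  calc eLpNorm (Pn f : ℝ → ℂ) 2 volume
      = eLpNorm (fun x => chi τ x * (f : ℝ → ℂ) x) 2 volume := eLpNorm_congr_ae (hP f)
    _ ≤ eLpNorm (f : ℝ → ℂ) 2 volume := by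
        apply eLpNorm_mono_ae (ae_of_all _ fun x => ?_)
        calc ‖chi τ x * (f : ℝ → ℂ) x‖ = ‖chi τ x‖ * ‖(f : ℝ → ℂ) x‖ := norm_mul _ _
          _ ≤ 1 * ‖(f : ℝ → ℂ) x‖ := by
              apply mul_le_mul_of_nonneg_right (norm_chi_le τ x) (norm_nonneg _)
          _ = ‖(f : ℝ → ℂ) x‖ := one_mul _

lemma P_opNorm_le {Pn : L2op} {τ : ℝ}
    (hP : ∀ f : L2, (Pn f : ℝ → ℂ) =ᵐ[volume] fun x => chi τ x * (f : ℝ → ℂ) x) :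
    ‖Pn‖ ≤ 1 :=
  Pn.opNorm_le_bound zero_le_one fun f => by
    rw [one_mul]; exact P_apply_norm_le hP f

lemma P_idem {Pn : L2op} {τ : ℝ}
    (hP : ∀ f : L2, (Pn f : ℝ → ℂ) =ᵐ[volume] fun x => chi τ x * (f : ℝ → ℂ) x) :
    Pn * Pn = Pn := by
  refine ContinuousLinearMap.ext fun f => ?_
  rw [ContinuousLinearMap.mul_apply]
  apply MeasureTheory.Lp.ext
  calc (Pn (Pn f) : ℝ → ℂ)
      =ᵐ[volume] fun x => chi τ x * (Pn f : ℝ → ℂ) x := hP (Pn f)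
    _ =ᵐ[volume] fun x => chi τ x * (chi τ x * (f : ℝ → ℂ) x) := by
        filter_upwards [hP f] with x hx
        rw [hx]
    _ =ᵐ[volume] (Pn f : ℝ → ℂ) := by
        filter_upwards [hP f] with x hx
        rw [hx, ← mul_assoc, chi_mul_chi]

lemma P_tendsto {tau : ℕ → ℝ} {P : ℕ → L2op}
    (htau : Tendsto tau atTop atTop)
    (hP : ∀ n, ∀ f : L2, (P n f : ℝ → ℂ) =ᵐ[volume] fun x => chi (tau n) x * (f : ℝ → ℂ) x)
    (f : L2) : Tendsto (fun n => P n f) atTop (𝓝 f) := by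
  rw [NormedAddCommGroup.tendsto_atTop]
  intro ε hε
  have hε4 : (0:ℝ) < ε/4 := by linarith
  obtain ⟨g, gsupp, hgnorm, gcont, gmem⟩ :=
    (MeasureTheory.Lp.memLp f).exists_hasCompactSupport_eLpNorm_sub_le (by norm_num)
      (ε := ENNReal.ofReal (ε/4)) (ENNReal.ofReal_pos.mpr hε4).ne'
  set g' : L2 := gmem.toLp g with hg'
  have hffg : ‖f - g'‖ ≤ ε/4 := by
    rw [MeasureTheory.Lp.norm_def]
    have h1 : ((f - g' : L2) : ℝ → ℂ) =ᵐ[volume] ((f : ℝ → ℂ) - g) := by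
      filter_upwards [MeasureTheory.Lp.coeFn_sub f g', gmem.coeFn_toLp] with x h1 h2
      simp only [h1, Pi.sub_apply, h2]; rw [hg', h2]
    rw [eLpNorm_congr_ae h1]
    exact ENNReal.toReal_le_of_le_ofReal (le_of_lt hε4) hgnorm
  obtain ⟨r, hr⟩ := gsupp.isBounded.subset_ball (0:ℝ)
  have hsupp : tsupport g ⊆ Set.Ioo (-r) r := by
    rwa [Real.ball_eq_Ioo, zero_sub, zero_add] at hr
  obtain ⟨N, hN⟩ := (htau.eventually_ge_atTop r).exists_forall_of_atTop
  refine ⟨N, fun n hn => ?_⟩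
  have hPg : P n g' = g' := by
    apply MeasureTheory.Lp.ext
    calc (P n g' : ℝ → ℂ)
        =ᵐ[volume] fun x => chi (tau n) x * (g' : ℝ → ℂ) x := hP n g'
      _ =ᵐ[volume] fun x => chi (tau n) x * g x := by
          filter_upwards [gmem.coeFn_toLp] with x hx
          rw [hx]
      _ =ᵐ[volume] g := ae_of_all _ (chi_mul_eq_self hsupp (hN n hn))
      _ =ᵐ[volume] (g' : ℝ → ℂ) := (gmem.coeFn_toLp).symm
  have hsplit : P n f - f = P n (f - g') + (g' - f) := by
    rw [map_sub, hPg]; abel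
  calc ‖P n f - f‖ = ‖P n (f - g') + (g' - f)‖ := by rw [hsplit]
    _ ≤ ‖P n (f - g')‖ + ‖g' - f‖ := norm_add_le _ _
    _ ≤ ‖f - g'‖ + ‖g' - f‖ := add_le_add_left (P_apply_norm_le (hP n) _) _
    _ = ‖f - g'‖ + ‖f - g'‖ := by rw [norm_sub_rev]
    _ < ε := by linarith

lemma strong_apply_tendsto {S : ℕ → L2op} {T : L2op} {x : ℕ → L2} {ρ : L2} {B : ℝ} {N1 : ℕ}
    (hB : ∀ n ≥ N1, ‖S n‖ ≤ B)
    (hst : Tendsto (fun n => S n ρ) atTop (𝓝 (T ρ)))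
    (hx : Tendsto x atTop (𝓝 ρ)) :
    Tendsto (fun n => S n (x n)) atTop (𝓝 (T ρ)) := by
  rw [tendsto_iff_norm_sub_tendsto_zero]
  have hb1 : Tendsto (fun n => B * ‖x n - ρ‖ + ‖S n ρ - T ρ‖) atTop (𝓝 0) := by
    have h1 : Tendsto (fun n => B * ‖x n - ρ‖) atTop (𝓝 0) := by
      have := (tendsto_iff_norm_sub_tendsto_zero.mp hx).const_mul B
      simpa using this
    have h2 : Tendsto (fun n => ‖S n ρ - T ρ‖) atTop (𝓝 0) :=
      tendsto_iff_norm_sub_tendsto_zero.mp hst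
    simpa using h1.add h2
  apply squeeze_zero_norm' _ hb1
  filter_upwards [eventually_ge_atTop N1] with n hn
  have hdecomp : S n (x n) - T ρ = S n (x n - ρ) + (S n ρ - T ρ) := by
    rw [map_sub]; abel
  calc ‖‖S n (x n) - T ρ‖‖ = ‖S n (x n) - T ρ‖ := norm_norm _
    _ = ‖S n (x n - ρ) + (S n ρ - T ρ)‖ := by rw [hdecomp]
    _ ≤ ‖S n (x n - ρ)‖ + ‖S n ρ - T ρ‖ := norm_add_le _ _
    _ ≤ B * ‖x n - ρ‖ + ‖S n ρ - T ρ‖ := by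
        refine add_le_add_left ?_ _
        calc ‖S n (x n - ρ)‖ ≤ ‖S n‖ * ‖x n - ρ‖ := (S n).le_opNorm _
          _ ≤ B * ‖x n - ρ‖ := mul_le_mul_of_nonneg_right (hB n hn) (norm_nonneg _)

end CarlemanAux

namespace CarlemanAux

set_option maxHeartbeats 1000000 in
lemma limit_unit {S : ℕ → L2op} {T : L2op} {lam : ℂ} {M B : ℝ} {N N1 : ℕ}
    (hM : ∀ n ≥ N, IsUnit (1 - lam • S n) ∧ ‖Ring.inverse (1 - lam • S n)‖ ≤ M)
    (hB : ∀ n ≥ N1, ‖S n‖ ≤ B)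
    (hst : ∀ f : L2, Tendsto (fun n => S n f) atTop (𝓝 (T f)))
    (hconv : ∀ f : L2, ∃ g : L2,
      Tendsto (fun n => (S n * Ring.inverse (1 - lam • S n)) f) atTop (𝓝 g)) :
    IsUnit (1 - lam • T) ∧
      (∀ f : L2, Tendsto (fun n => Ring.inverse (1 - lam • S n) f) atTop
        (𝓝 (Ring.inverse (1 - lam • T) f))) ∧
      ‖Ring.inverse (1 - lam • T)‖ ≤ M := by
  have hM0 : 0 ≤ M := le_trans (norm_nonneg _) (hM N le_rfl).2
  -- key: for every f there is ρ with (1 - lam•T) ρ = f which is the limit of the resolvents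
  have key : ∀ f : L2, ∃ ρ : L2, (1 - lam • T) ρ = f ∧
      Tendsto (fun n => Ring.inverse (1 - lam • S n) f) atTop (𝓝 ρ) := by
    intro f
    obtain ⟨gl, hgl⟩ := hconv f
    have hpt : ∀ n ≥ N, Ring.inverse (1 - lam • S n) f =
        f + lam • ((S n * Ring.inverse (1 - lam • S n)) f) := by
      intro n hn
      conv_lhs => rw [inv_one_sub_smul_eq (hM n hn).1]
      simp [ContinuousLinearMap.add_apply, ContinuousLinearMap.smul_apply]
    refine ⟨f + lam • gl, ?_, ?_⟩; swap
    · apply Tendsto.congr' _ (tendsto_const_nhds.add (hgl.const_smul lam))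
      filter_upwards [eventually_ge_atTop N] with n hn
      exact (hpt n hn).symm
    · set x : ℕ → L2 := fun n => Ring.inverse (1 - lam • S n) f with hx
      have hxρ : Tendsto x atTop (𝓝 (f + lam • gl)) := by
        apply Tendsto.congr' _ (tendsto_const_nhds.add (hgl.const_smul lam))
        filter_upwards [eventually_ge_atTop N] with n hn
        exact (hpt n hn).symm
      set ρ := f + lam • gl with hρ
      have hSx : Tendsto (fun n => S n (x n)) atTop (𝓝 (T ρ)) :=
        strong_apply_tendsto hB (hst ρ) hxρ
      have happly : Tendsto (fun n => (1 - lam • S n) (x n)) atTop (𝓝 ((1 - lam • T) ρ)) := by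
        have expand : ∀ n, (1 - lam • S n) (x n) = x n - lam • (S n (x n)) := by
          intro n; simp [ContinuousLinearMap.sub_apply, ContinuousLinearMap.smul_apply]
        have expandT : (1 - lam • T) ρ = ρ - lam • (T ρ) := by
          simp [ContinuousLinearMap.sub_apply, ContinuousLinearMap.smul_apply]
        rw [expandT]; simp only [expand]
        exact hxρ.sub (hSx.const_smul lam)
      have hconst : Tendsto (fun n => (1 - lam • S n) (x n)) atTop (𝓝 f) := by
        apply Tendsto.congr' _ (tendsto_const_nhds (x := f))
        filter_upwards [eventually_ge_atTop N] with n hn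
        have := Ring.mul_inverse_cancel _ (hM n hn).1
        rw [hx, ← ContinuousLinearMap.mul_apply, this, ContinuousLinearMap.one_apply]
      exact (tendsto_nhds_unique happly hconst)
  have hlow : ∀ h : L2, ‖h‖ ≤ M * ‖(1 - lam • T) h‖ := by
    intro h
    have hseq : ∀ n ≥ N, ‖h‖ ≤ M * ‖(1 - lam • S n) h‖ := by
      intro n hn
      have hid : Ring.inverse (1 - lam • S n) ((1 - lam • S n) h) = h := by
        rw [← ContinuousLinearMap.mul_apply, Ring.inverse_mul_cancel _ (hM n hn).1,
          ContinuousLinearMap.one_apply]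
      calc ‖h‖ = ‖Ring.inverse (1 - lam • S n) ((1 - lam • S n) h)‖ := by rw [hid]
        _ ≤ ‖Ring.inverse (1 - lam • S n)‖ * ‖(1 - lam • S n) h‖ := le_opNorm _ _
        _ ≤ M * ‖(1 - lam • S n) h‖ :=
            mul_le_mul_of_nonneg_right (hM n hn).2 (norm_nonneg _)
    have htend : Tendsto (fun n => M * ‖(1 - lam • S n) h‖) atTop
        (𝓝 (M * ‖(1 - lam • T) h‖)) := by
      have h1 : Tendsto (fun n => (1 - lam • S n) h) atTop (𝓝 ((1 - lam • T) h)) := by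
        have expand : ∀ n, (1 - lam • S n) h = h - lam • (S n h) := by
          intro n; simp [ContinuousLinearMap.sub_apply, ContinuousLinearMap.smul_apply]
        have expandT : (1 - lam • T) h = h - lam • (T h) := by
          simp [ContinuousLinearMap.sub_apply, ContinuousLinearMap.smul_apply]
        rw [expandT]; simp only [expand]
        exact tendsto_const_nhds.sub ((hst h).const_smul lam)
      exact (h1.norm).const_mul M
    have hev : ∀ᶠ n in atTop, ‖h‖ ≤ M * ‖(1 - lam • S n) h‖ := by
      filter_upwards [eventually_ge_atTop N] with n hn
      exact hseq n hn
    exact ge_of_tendsto htend hev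
  have hker : LinearMap.ker ((1 - lam • T : L2op) : L2 →ₗ[ℂ] L2) = ⊥ := by
    rw [LinearMap.ker_eq_bot']
    intro m hm
    have hm' : (1 - lam • T) m = 0 := hm
    have := hlow m
    rw [hm', norm_zero, mul_zero] at this
    exact norm_le_zero_iff.mp this
  have hrange : LinearMap.range ((1 - lam • T : L2op) : L2 →ₗ[ℂ] L2) = ⊤ := by
    rw [LinearMap.range_eq_top]
    intro f
    obtain ⟨ρ, hρ, _⟩ := key f
    exact ⟨ρ, hρ⟩
  set e := ContinuousLinearEquiv.ofBijective (1 - lam • T) hker hrange with he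
  have hecoe : ∀ x : L2, e x = (1 - lam • T) x := fun x => rfl
  have hunit : IsUnit (1 - lam • T) := by
    refine ⟨⟨1 - lam • T, (e.symm : L2 →L[ℂ] L2), ?_, ?_⟩, rfl⟩
    · refine ContinuousLinearMap.ext fun f => ?_
      show (1 - lam • T) (e.symm f) = f
      rw [← hecoe]; exact e.apply_symm_apply f
    · refine ContinuousLinearMap.ext fun f => ?_
      show e.symm ((1 - lam • T) f) = f
      rw [← hecoe]; exact e.symm_apply_apply f
  have hres : ∀ f : L2, Tendsto (fun n => Ring.inverse (1 - lam • S n) f) atTop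
      (𝓝 (Ring.inverse (1 - lam • T) f)) := by
    intro f
    obtain ⟨ρ, hρ, htend⟩ := key f
    have : Ring.inverse (1 - lam • T) f = ρ := by
      rw [← hρ, ← ContinuousLinearMap.mul_apply, Ring.inverse_mul_cancel _ hunit,
        ContinuousLinearMap.one_apply]
    rw [this]; exact htend
  refine ⟨hunit, hres, ?_⟩
  apply opNorm_le_bound _ hM0
  intro f
  apply le_of_tendsto ((hres f).norm)
  filter_upwards [eventually_ge_atTop N] with n hn
  calc ‖Ring.inverse (1 - lam • S n) f‖ ≤ ‖Ring.inverse (1 - lam • S n)‖ * ‖f‖ := le_opNorm _ _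
    _ ≤ M * ‖f‖ := mul_le_mul_of_nonneg_right (hM n hn).2 (norm_nonneg _)


lemma inverse_one_sub_norm_le_two {w : L2op} (hw : ‖w‖ ≤ 1/2) :
    IsUnit (1 - w) ∧ ‖Ring.inverse (1 - w)‖ ≤ 2 := by
  have hw1 : ‖w‖ < 1 := lt_of_le_of_lt hw (by norm_num)
  refine ⟨isUnit_one_sub_of_norm_lt_one hw1, ?_⟩
  rw [← geom_series_eq_inverse w hw1]
  have h0 := tsum_geometric_le_of_norm_lt_one w hw1
  have h1 : ‖(1 : L2op)‖ ≤ 1 := by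
    rw [ContinuousLinearMap.one_def]; exact ContinuousLinearMap.norm_id_le
  have h2 : (1 - ‖w‖)⁻¹ ≤ 2 := by
    rw [inv_le_comm₀ (by linarith) (by norm_num)]
    linarith
  linarith

set_option maxHeartbeats 1000000 in
/-- Local (Neumann series) extension of uniform resolvent bounds. -/
lemma local_bound {S : ℕ → L2op} {z0 : ℂ} {M0 C : ℝ} (hM0 : 0 < M0) (hC : 0 ≤ C)
    (hz0 : ‖z0‖ ≤ C) {n : ℕ}
    (h0 : IsUnit (1 - z0 • S n))
    (h0n : ‖S n * Ring.inverse (1 - z0 • S n)‖ ≤ M0)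
    {z : ℂ} (hz : ‖z - z0‖ < (2 * (M0 + 1))⁻¹) :
    IsUnit (1 - z • S n) ∧ ‖Ring.inverse (1 - z • S n)‖ ≤ 2 * (1 + C * M0) := by
  set w : L2op := (z - z0) • (S n * Ring.inverse (1 - z0 • S n)) with hwdef
  have hwnorm : ‖w‖ ≤ 1/2 := by
    rw [hwdef]
    calc ‖(z - z0) • (S n * Ring.inverse (1 - z0 • S n))‖
        = ‖z - z0‖ * ‖S n * Ring.inverse (1 - z0 • S n)‖ :=
          norm_smul (z - z0) (S n * Ring.inverse (1 - z0 • S n))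
      _
        ≤ (2 * (M0 + 1))⁻¹ * M0 := by
          apply mul_le_mul (le_of_lt hz) h0n (norm_nonneg _) (by positivity)
      _ ≤ 1/2 := by
          rw [inv_mul_le_iff₀ (by positivity)]
          nlinarith [hM0.le]
  obtain ⟨hwunit, hwbound⟩ := inverse_one_sub_norm_le_two hwnorm
  have hfact : (1 - z0 • S n) * (1 - w) = 1 - z • S n := one_sub_smul_extend h0
  have hres0 : ‖Ring.inverse (1 - z0 • S n)‖ ≤ 1 + C * M0 := by
    rw [inv_one_sub_smul_eq h0]
    calc ‖(1 : L2op) + z0 • (S n * Ring.inverse (1 - z0 • S n))‖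
        ≤ ‖(1 : L2op)‖ + ‖z0 • (S n * Ring.inverse (1 - z0 • S n))‖ := norm_add_le _ _
      _ ≤ 1 + C * M0 := by
          have h1 : ‖(1 : L2op)‖ ≤ 1 := by
            rw [ContinuousLinearMap.one_def]; exact ContinuousLinearMap.norm_id_le
          have h2 : ‖z0 • (S n * Ring.inverse (1 - z0 • S n))‖ ≤ C * M0 := by
            rw [norm_smul z0 (S n * Ring.inverse (1 - z0 • S n))]
            exact mul_le_mul hz0 h0n (norm_nonneg _) hC
          linarith
  obtain ⟨hzunit, hzinv⟩ := inverse_mul h0 hwunit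
  rw [hfact] at hzunit hzinv
  refine ⟨hzunit, ?_⟩
  rw [hzinv]
  calc ‖Ring.inverse (1 - w) * Ring.inverse (1 - z0 • S n)‖
      ≤ ‖Ring.inverse (1 - w)‖ * ‖Ring.inverse (1 - z0 • S n)‖ := norm_mul_le _ _
    _ ≤ 2 * (1 + C * M0) := by
        apply mul_le_mul hwbound hres0 (norm_nonneg _) (by norm_num)

/-- Uniform resolvent bound over a compact set. -/
lemma uniform_bound {S : ℕ → L2op} {Kc : Set ℂ} (hKc : IsCompact Kc) {C : ℝ} (hC : 0 ≤ C)
    (hbd : ∀ z ∈ Kc, ‖z‖ ≤ C)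
    (hreg : ∀ z ∈ Kc, ∃ M N, 0 < M ∧ ∀ n > N,
      IsUnit (1 - z • S n) ∧ ‖S n * Ring.inverse (1 - z • S n)‖ ≤ M) :
    ∃ N₀ M₀, 0 < M₀ ∧ ∀ n ≥ N₀, ∀ z ∈ Kc,
      IsUnit (1 - z • S n) ∧ ‖Ring.inverse (1 - z • S n)‖ ≤ M₀ := by
  classical
  choose! M N hMpos hM using hreg
  have hcover : Kc ⊆ ⋃ z ∈ Kc, Metric.ball z ((2 * (M z + 1))⁻¹) := by
    intro z hz
    apply Set.mem_biUnion hz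
    exact Metric.mem_ball_self (by have := hMpos z hz; positivity)
  obtain ⟨s, hsub, hfin, hcov⟩ := hKc.elim_finite_subcover_image
    (fun z _ => Metric.isOpen_ball) hcover
  obtain ⟨N₀, hN₀⟩ := Finset.exists_le (hfin.toFinset.image N)
  obtain ⟨M₀', hM₀'⟩ := Finset.exists_le (hfin.toFinset.image (fun z => 2 * (1 + C * M z)))
  refine ⟨N₀ + 1, max M₀' 1, lt_of_lt_of_le zero_lt_one (le_max_right _ _), ?_⟩
  intro n hn z hz
  obtain ⟨z0, hz0s, hzball⟩ := Set.mem_iUnion₂.mp (hcov hz)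
  have hz0K : z0 ∈ Kc := hsub hz0s
  have hngt : n > N z0 := by
    have : N z0 ≤ N₀ := hN₀ _ (Finset.mem_image_of_mem N (hfin.mem_toFinset.mpr hz0s))
    omega
  obtain ⟨hu, hb⟩ := local_bound (hMpos z0 hz0K) hC (hbd z0 hz0K)
    ((hM z0 hz0K n hngt).1) ((hM z0 hz0K n hngt).2) (by have h := Metric.mem_ball.mp hzball; rwa [dist_eq_norm] at h)
  refine ⟨hu, le_trans hb (le_trans ?_ (le_max_left _ _))⟩
  exact hM₀' _ (Finset.mem_image_of_mem _ (hfin.mem_toFinset.mpr hz0s))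

/-- Uniform convergence from equi-Lipschitz + pointwise convergence on a compact set. -/
lemma unif_conv {E : Type*} [NormedAddCommGroup E] {Kc : Set ℂ} (hKc : IsCompact Kc)
    {v : ℕ → ℂ → E} {L : ℝ} {N : ℕ} (hL : 0 ≤ L)
    (hlip : ∀ n ≥ N, ∀ lam ∈ Kc, ∀ mu ∈ Kc, ‖v n lam - v n mu‖ ≤ L * dist lam mu)
    (hpt : ∀ lam ∈ Kc, Tendsto (fun n => v n lam) atTop (𝓝 0)) :
    ∀ ε > 0, ∀ᶠ n in atTop, ∀ lam ∈ Kc, ‖v n lam‖ ≤ ε := by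
  classical
  intro ε hε
  set δ : ℝ := ε / (2 * (L + 1)) with hδ
  have hδpos : 0 < δ := by positivity
  have hcover : Kc ⊆ ⋃ z ∈ Kc, Metric.ball z δ := fun z hz =>
    Set.mem_biUnion hz (Metric.mem_ball_self hδpos)
  obtain ⟨s, hsub, hfin, hcov⟩ := hKc.elim_finite_subcover_image
    (fun z _ => Metric.isOpen_ball) hcover
  have hev : ∀ᶠ n in atTop, ∀ z ∈ hfin.toFinset, ‖v n z‖ ≤ ε / 2 := by
    rw [Filter.eventually_all_finset]
    intro z hzs
    have hzK : z ∈ Kc := hsub (hfin.mem_toFinset.mp hzs)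
    have := (hpt z hzK).norm
    simp only [norm_zero] at this
    exact this.eventually_le_const (by linarith)
  filter_upwards [hev, eventually_ge_atTop N] with n hn hnN
  intro lam hlam
  obtain ⟨z0, hz0s, hzball⟩ := Set.mem_iUnion₂.mp (hcov hlam)
  have hz0K : z0 ∈ Kc := hsub hz0s
  calc ‖v n lam‖ = ‖(v n lam - v n z0) + v n z0‖ := by rw [sub_add_cancel]
    _ ≤ ‖v n lam - v n z0‖ + ‖v n z0‖ := norm_add_le _ _
    _ ≤ L * dist lam z0 + ε / 2 := by
        refine add_le_add (hlip n hnN lam hlam z0 hz0K) (hn z0 (hfin.mem_toFinset.mpr hz0s))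
    _ ≤ ε := by
        have hd : dist lam z0 ≤ δ := le_of_lt (Metric.mem_ball.mp hzball)
        have : L * dist lam z0 ≤ L * δ := mul_le_mul_of_nonneg_left hd hL
        have hkey : (L + 1) * δ = ε / 2 := by
          rw [hδ]; field_simp
        have hLδ : L * δ ≤ ε / 2 := by
          rw [← hkey]
          exact mul_le_mul_of_nonneg_right (by linarith) (le_of_lt hδpos)
        linarith



lemma res_apply_lip {S : L2op} {lam mu : ℂ} {M B : ℝ}
    (hl : IsUnit (1 - lam • S)) (hm : IsUnit (1 - mu • S))
    (hMl : ‖Ring.inverse (1 - lam • S)‖ ≤ M) (hMm : ‖Ring.inverse (1 - mu • S)‖ ≤ M)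
    (hSB : ‖S‖ ≤ B) (hM0 : 0 ≤ M) (hB0 : 0 ≤ B) (g : L2) :
    ‖Ring.inverse (1 - lam • S) g - Ring.inverse (1 - mu • S) g‖ ≤
      dist lam mu * (M * (B * (M * ‖g‖))) := by
  rw [← ContinuousLinearMap.sub_apply, inv_one_sub_smul_sub hl hm,
    ContinuousLinearMap.smul_apply]
  calc ‖(lam - mu) • ((Ring.inverse (1 - lam • S) * S * Ring.inverse (1 - mu • S)) g)‖
      = ‖lam - mu‖ * ‖(Ring.inverse (1 - lam • S) * S * Ring.inverse (1 - mu • S)) g‖ :=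
        norm_smul (lam - mu) ((Ring.inverse (1 - lam • S) * S * Ring.inverse (1 - mu • S)) g)
    _ ≤ dist lam mu * (M * (B * (M * ‖g‖))) := by
        rw [dist_eq_norm]
        apply mul_le_mul_of_nonneg_left _ (norm_nonneg _)
        rw [ContinuousLinearMap.mul_apply, ContinuousLinearMap.mul_apply]
        calc ‖Ring.inverse (1 - lam • S) (S (Ring.inverse (1 - mu • S) g))‖
            ≤ M * ‖S (Ring.inverse (1 - mu • S) g)‖ :=
              le_trans (le_opNorm _ _) (mul_le_mul_of_nonneg_right hMl (norm_nonneg _))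
          _ ≤ M * (B * ‖Ring.inverse (1 - mu • S) g‖) := by
              apply mul_le_mul_of_nonneg_left _ hM0
              exact le_trans (le_opNorm _ _) (mul_le_mul_of_nonneg_right hSB (norm_nonneg _))
          _ ≤ M * (B * (M * ‖g‖)) := by
              apply mul_le_mul_of_nonneg_left _ hM0
              apply mul_le_mul_of_nonneg_left _ hB0
              exact le_trans (le_opNorm _ _) (mul_le_mul_of_nonneg_right hMm (norm_nonneg _))

end CarlemanAux

open CarlemanAux in
set_option maxHeartbeats 2000000 in
theorem statement4 (T : L2op) (K : ℝ → ℝ → ℂ) (kt kt' : ℝ → L2)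
    (hK : IsK0Kernel K kt kt') (hT : IsInducedBy T K)
    (tau : ℕ → ℝ) (P : ℕ → L2op) (hiv : ConditionIV K T tau P)
    (b : ℕ → ℂ) (hb : Tendsto b atTop (𝓝 (0 : ℂ)))
    (Kc : Set ℂ) (hKc : IsCompact Kc) (hKcsub : Kc ⊆ nablaS (fun n => b n • (1 : L2op) + P n * T * P n)) (t : ℝ) :
    (∀ᶠ n in atTop, ∀ lam ∈ Kc, lamn b lam n ∈ regularSet (P n * T)) ∧
    Tendsto (fun n => ⨆ lam ∈ Kc,
        ‖res (P n * T) (lamn b lam n) (P n (kt' t)) - res T lam (kt' t)‖)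
      atTop (𝓝 (0 : ℝ)) := by
  classical
  set g : L2 := kt' t with hgdef
  set Sn : ℕ → L2op := fun n => b n • (1 : L2op) + P n * T * P n with hSn
  -- a bound on Kc
  obtain ⟨C, hC0, hCbd⟩ : ∃ C : ℝ, 0 ≤ C ∧ ∀ z ∈ Kc, ‖z‖ ≤ C := by
    obtain ⟨r, hr⟩ := hKc.isBounded.subset_ball (0 : ℂ)
    refine ⟨max r 0, le_max_right _ _, fun z hz => ?_⟩
    have := Metric.mem_ball.mp (hr hz)
    rw [dist_zero_right] at this
    exact le_trans this.le (le_max_left _ _)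
  -- projection facts
  have hPn_norm : ∀ n (f : L2), ‖P n f‖ ≤ ‖f‖ := fun n => P_apply_norm_le (hiv.proj n)
  have hPidem : ∀ n, P n * P n = P n := fun n => P_idem (hiv.proj n)
  have hPop : ∀ n, ‖P n‖ ≤ 1 := fun n => P_opNorm_le (hiv.proj n)
  have hPt : ∀ f : L2, Tendsto (fun n => P n f) atTop (𝓝 f) :=
    P_tendsto hiv.tendsto_top hiv.proj
  -- eventual bound on b
  have hbn : Tendsto (fun n => ‖b n‖) atTop (𝓝 (0:ℝ)) := by simpa using hb.norm
  obtain ⟨N1, hN1⟩ := (hbn.eventually_le_const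
    (show (0:ℝ) < 1 by norm_num)).exists_forall_of_atTop
  set B : ℝ := ‖T‖ + 1 with hBdef
  have hB0 : 0 ≤ B := by positivity
  have hTPnorm : ∀ n, ‖P n * T * P n‖ ≤ ‖T‖ := by
    intro n
    calc ‖P n * T * P n‖ ≤ ‖P n * T‖ * ‖P n‖ := norm_mul_le _ _
      _ ≤ (‖P n‖ * ‖T‖) * ‖P n‖ := by
          apply mul_le_mul_of_nonneg_right (norm_mul_le _ _) (norm_nonneg _)
      _ ≤ (1 * ‖T‖) * 1 := by
          apply mul_le_mul (mul_le_mul_of_nonneg_right (hPop n) (norm_nonneg _))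
            (hPop n) (norm_nonneg _) (by positivity)
      _ = ‖T‖ := by ring
  have hSB : ∀ n ≥ N1, ‖Sn n‖ ≤ B := by
    intro n hn
    calc ‖Sn n‖ ≤ ‖b n • (1 : L2op)‖ + ‖P n * T * P n‖ := norm_add_le _ _
      _ ≤ 1 * 1 + ‖T‖ := by
          apply add_le_add _ (hTPnorm n)
          calc ‖b n • (1 : L2op)‖ = ‖b n‖ * ‖(1 : L2op)‖ := norm_smul (b n) (1 : L2op)
            _ ≤ 1 * 1 := by
                apply mul_le_mul (hN1 n hn) _ (norm_nonneg _) zero_le_one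
                rw [ContinuousLinearMap.one_def]
                exact ContinuousLinearMap.norm_id_le
      _ = B := by rw [hBdef]; ring
  -- strong convergence Sn → T
  have hst : ∀ f : L2, Tendsto (fun n => Sn n f) atTop (𝓝 (T f)) := by
    intro f
    have happ : ∀ n, Sn n f = b n • f + P n (T (P n f)) := by
      intro n
      simp [hSn, ContinuousLinearMap.add_apply, ContinuousLinearMap.smul_apply,
        ContinuousLinearMap.mul_apply]
    have h1 : Tendsto (fun n => b n • f) atTop (𝓝 0) := by
      simpa using hb.smul_const f
    have h2 : Tendsto (fun n => P n (T (P n f))) atTop (𝓝 (T f)) := by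
      have hTf : Tendsto (fun n => T (P n f)) atTop (𝓝 (T f)) :=
        (T.continuous.tendsto _).comp (hPt f)
      have := strong_apply_tendsto (S := P) (T := (1 : L2op)) (N1 := 0)
        (fun n _ => hPop n) (by simpa using hPt (T f)) hTf
      simpa using this
    have := h1.add h2
    rw [zero_add] at this
    exact this.congr (fun n => (happ n).symm)
  -- uniform resolvent bound over Kc
  have hreg : ∀ z ∈ Kc, ∃ M N, 0 < M ∧ ∀ n > N,
      IsUnit (1 - z • Sn n) ∧ ‖Sn n * Ring.inverse (1 - z • Sn n)‖ ≤ M := by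
    intro z hz
    obtain ⟨⟨hzne, M, hMpos, N, hN⟩, hconv⟩ := hKcsub hz
    exact ⟨M, N, hMpos, fun n hn => (hN n hn : _)⟩
  obtain ⟨N0, M, hMpos, hunif⟩ := uniform_bound hKc hC0 hCbd hreg
  -- pointwise limits
  have hlim : ∀ z ∈ Kc, IsUnit (1 - z • T) ∧
      (∀ f : L2, Tendsto (fun n => Ring.inverse (1 - z • Sn n) f) atTop
        (𝓝 (Ring.inverse (1 - z • T) f))) ∧ ‖Ring.inverse (1 - z • T)‖ ≤ M := by
    intro z hz
    have hconv := (hKcsub hz).2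
    exact limit_unit (fun n hn => hunif n hn z hz) hSB hst (fun f => hconv f)
  -- eventual smallness of b for denominators
  obtain ⟨N3, hN3⟩ := (hbn.eventually_le_const
    (show (0:ℝ) < (2*(C+1))⁻¹ by positivity)).exists_forall_of_atTop
  set N2 : ℕ := max (max N0 N1) N3 with hN2def
  -- the main pointwise identity
  have main : ∀ n ≥ N2, ∀ lam ∈ Kc,
      IsUnit (1 - lamn b lam n • (P n * T)) ∧
      res (P n * T) (lamn b lam n) (P n g) =
        (1 - b n * lam) • (P n (Ring.inverse (1 - lam • Sn n) g)) := by
    intro n hn lam hlam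
    have hn0 : n ≥ N0 := le_trans (le_trans (le_max_left _ _) (le_max_left _ _)) hn
    have hn3 : n ≥ N3 := le_trans (le_max_right _ _) hn
    have hdnorm : ‖b n * lam‖ ≤ 1/2 := by
      calc ‖b n * lam‖ = ‖b n‖ * ‖lam‖ := norm_mul _ _
        _ ≤ (2*(C+1))⁻¹ * C := by
            apply mul_le_mul (hN3 n hn3) (hCbd lam hlam) (norm_nonneg _) (by positivity)
        _ ≤ 1/2 := by
            rw [inv_mul_le_iff₀ (by positivity)]
            nlinarith
    have hdne : (1 : ℂ) - b n * lam ≠ 0 := by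
      intro h
      have h1 : (1 : ℂ) = b n * lam := by rwa [sub_eq_zero] at h
      have : ‖(1:ℂ)‖ ≤ 1/2 := h1 ▸ hdnorm
      rw [norm_one] at this
      norm_num at this
    have hSu : IsUnit (1 - lam • Sn n) := (hunif n hn0 lam hlam).1
    have hiden : 1 - (lamn b lam n) • (P n * T * P n) =
        ((1 : ℂ) - b n * lam)⁻¹ • (1 - lam • Sn n) := by
      have := one_sub_lamn_smul (A := P n * T * P n) (b := b n) (lam := lam) hdne
      simp only [lamn, hSn] at this ⊢
      exact this
    obtain ⟨hsu1, hsu2⟩ := isUnit_smul_unit (inv_ne_zero hdne) hSu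
    have htU : IsUnit (1 - (lamn b lam n) • (P n * T * P n)) := by
      rw [hiden]; exact hsu1
    have htinv : Ring.inverse (1 - (lamn b lam n) • (P n * T * P n)) =
        ((1 : ℂ) - b n * lam) • Ring.inverse (1 - lam • Sn n) := by
      rw [hiden, hsu2, inv_inv]
    have hxy : (P n * ((lamn b lam n) • T)) * P n = lamn b lam n • (P n * T * P n) := by
      rw [mul_smul_comm, smul_mul_assoc]
    have hyx : P n * (P n * ((lamn b lam n) • T)) = lamn b lam n • (P n * T) := by
      rw [← mul_assoc, hPidem n, mul_smul_comm]
    obtain ⟨hu2, hre⟩ := swap_unit (x := P n * (lamn b lam n • T)) (y := P n)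
      (by rw [hxy]; exact htU)
    rw [hyx] at hu2 hre
    rw [hxy] at hre
    refine ⟨hu2, ?_⟩
    show Ring.inverse (1 - lamn b lam n • (P n * T)) (P n g) = _
    calc Ring.inverse (1 - lamn b lam n • (P n * T)) (P n g)
        = (Ring.inverse (1 - lamn b lam n • (P n * T)) * P n) g := by
          rw [ContinuousLinearMap.mul_apply]
      _ = (P n * Ring.inverse (1 - lamn b lam n • (P n * T * P n))) g := by rw [hre]
      _ = P n ((((1 : ℂ) - b n * lam) • Ring.inverse (1 - lam • Sn n)) g) := by
          rw [ContinuousLinearMap.mul_apply, htinv]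
      _ = (1 - b n * lam) • (P n (Ring.inverse (1 - lam • Sn n) g)) := by
          rw [ContinuousLinearMap.smul_apply, ContinuousLinearMap.map_smul]
  constructor
  · rw [eventually_atTop]
    exact ⟨N2, fun n hn lam hlam => (main n hn lam hlam).1⟩
  -- second part: uniform convergence of the sup
  set v : ℕ → ℂ → L2 := fun n lam =>
    res (P n * T) (lamn b lam n) (P n g) - res T lam g with hvdef
  have hRnorm : ∀ z ∈ Kc, ∀ n ≥ N0, ‖Ring.inverse (1 - z • Sn n)‖ ≤ M :=
    fun z hz n hn => (hunif n hn z hz).2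
  have hMg0 : (0:ℝ) ≤ M := hMpos.le
  -- equi-Lipschitz property
  set L : ℝ := (1 + C) * (M * (B * (M * ‖g‖))) + M * ‖g‖ + M * (B * (M * ‖g‖)) with hLdef
  have hL0 : 0 ≤ L := by positivity
  have hlip : ∀ n ≥ N2, ∀ lam ∈ Kc, ∀ mu ∈ Kc, ‖v n lam - v n mu‖ ≤ L * dist lam mu := by
    intro n hn lam hlam mu hmu
    have hn0 : n ≥ N0 := le_trans (le_trans (le_max_left _ _) (le_max_left _ _)) hn
    have hn1 : n ≥ N1 := le_trans (le_trans (le_max_right _ _) (le_max_left _ _)) hn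
    obtain ⟨_, hml⟩ := main n hn lam hlam
    obtain ⟨_, hmm⟩ := main n hn mu hmu
    have hTB : ‖T‖ ≤ B := by rw [hBdef]; linarith
    have e2 : ‖res T lam g - res T mu g‖ ≤ dist lam mu * (M * (B * (M * ‖g‖))) := by
      simp only [res]
      exact res_apply_lip (hlim lam hlam).1 (hlim mu hmu).1 (hlim lam hlam).2.2
        (hlim mu hmu).2.2 hTB hMg0 hB0 g
    have e1 : ‖Ring.inverse (1 - lam • Sn n) g - Ring.inverse (1 - mu • Sn n) g‖ ≤
        dist lam mu * (M * (B * (M * ‖g‖))) :=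
      res_apply_lip (hunif n hn0 lam hlam).1 (hunif n hn0 mu hmu).1
        (hunif n hn0 lam hlam).2 (hunif n hn0 mu hmu).2 (hSB n hn1) hMg0 hB0 g
    have hdl : ‖(1 : ℂ) - b n * lam‖ ≤ 1 + C := by
      calc ‖(1 : ℂ) - b n * lam‖ ≤ ‖(1:ℂ)‖ + ‖b n * lam‖ := norm_sub_le _ _
        _ ≤ 1 + 1 * C := by
            rw [norm_one]
            apply add_le_add_right
            rw [norm_mul]
            exact mul_le_mul (hN1 n hn1) (hCbd lam hlam) (norm_nonneg _) zero_le_one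
        _ = 1 + C := by ring
    have hddiff : ‖((1 : ℂ) - b n * lam) - ((1 : ℂ) - b n * mu)‖ ≤ dist lam mu := by
      have : ((1 : ℂ) - b n * lam) - ((1 : ℂ) - b n * mu) = b n * (mu - lam) := by ring
      rw [this, norm_mul, dist_comm, dist_eq_norm]
      calc ‖b n‖ * ‖mu - lam‖ ≤ 1 * ‖mu - lam‖ :=
            mul_le_mul_of_nonneg_right (hN1 n hn1) (norm_nonneg _)
        _ = ‖mu - lam‖ := one_mul _
    have hRmu : ‖P n (Ring.inverse (1 - mu • Sn n) g)‖ ≤ M * ‖g‖ := by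
      calc ‖P n (Ring.inverse (1 - mu • Sn n) g)‖ ≤ ‖Ring.inverse (1 - mu • Sn n) g‖ :=
            hPn_norm n _
        _ ≤ ‖Ring.inverse (1 - mu • Sn n)‖ * ‖g‖ := le_opNorm _ _
        _ ≤ M * ‖g‖ := mul_le_mul_of_nonneg_right (hunif n hn0 mu hmu).2 (norm_nonneg _)
    have hsplit : v n lam - v n mu =
        (((1 : ℂ) - b n * lam) • (P n (Ring.inverse (1 - lam • Sn n) g) -
          P n (Ring.inverse (1 - mu • Sn n) g)) +
         (((1 : ℂ) - b n * lam) - ((1 : ℂ) - b n * mu)) •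
           P n (Ring.inverse (1 - mu • Sn n) g)) -
        (res T lam g - res T mu g) := by
      rw [hvdef]
      simp only [hml, hmm]
      module
    rw [hsplit]
    have hb1 : ‖((1 : ℂ) - b n * lam) • (P n (Ring.inverse (1 - lam • Sn n) g) -
        P n (Ring.inverse (1 - mu • Sn n) g))‖ ≤
        (1 + C) * (dist lam mu * (M * (B * (M * ‖g‖)))) := by
      rw [norm_smul ((1 : ℂ) - b n * lam) _]
      apply mul_le_mul hdl _ (norm_nonneg _) (by positivity)
      rw [← map_sub]
      calc ‖P n (Ring.inverse (1 - lam • Sn n) g - Ring.inverse (1 - mu • Sn n) g)‖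
          ≤ ‖Ring.inverse (1 - lam • Sn n) g - Ring.inverse (1 - mu • Sn n) g‖ := hPn_norm n _
        _ ≤ dist lam mu * (M * (B * (M * ‖g‖))) := e1
    have hb2 : ‖(((1 : ℂ) - b n * lam) - ((1 : ℂ) - b n * mu)) •
        P n (Ring.inverse (1 - mu • Sn n) g)‖ ≤ dist lam mu * (M * ‖g‖) := by
      rw [norm_smul (((1 : ℂ) - b n * lam) - ((1 : ℂ) - b n * mu)) _]
      exact mul_le_mul hddiff hRmu (norm_nonneg _) dist_nonneg
    calc ‖_ - (res T lam g - res T mu g)‖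
        ≤ ‖((1 : ℂ) - b n * lam) • (P n (Ring.inverse (1 - lam • Sn n) g) -
            P n (Ring.inverse (1 - mu • Sn n) g)) +
           (((1 : ℂ) - b n * lam) - ((1 : ℂ) - b n * mu)) •
             P n (Ring.inverse (1 - mu • Sn n) g)‖ + ‖res T lam g - res T mu g‖ :=
          norm_sub_le _ _
      _ ≤ ((1 + C) * (dist lam mu * (M * (B * (M * ‖g‖)))) + dist lam mu * (M * ‖g‖)) +
          dist lam mu * (M * (B * (M * ‖g‖))) := by
          apply add_le_add (le_trans (norm_add_le _ _) (add_le_add hb1 hb2)) e2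
      _ = L * dist lam mu := by rw [hLdef]; ring
  -- pointwise convergence to 0
  have hpt : ∀ lam ∈ Kc, Tendsto (fun n => v n lam) atTop (𝓝 0) := by
    intro lam hlam
    obtain ⟨hTu, hTconv, hTnorm⟩ := hlim lam hlam
    have hdconv : Tendsto (fun n => (1 : ℂ) - b n * lam) atTop (𝓝 1) := by
      have := (hb.mul_const lam).const_sub (1 : ℂ)
      simpa using this
    have hPR : Tendsto (fun n => P n (Ring.inverse (1 - lam • Sn n) g)) atTop
        (𝓝 (Ring.inverse (1 - lam • T) g)) := by
      have h1 : Tendsto (fun n => P n (Ring.inverse (1 - lam • T) g)) atTop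
          (𝓝 ((1 : L2op) (Ring.inverse (1 - lam • T) g))) := by
        simpa using hPt (Ring.inverse (1 - lam • T) g)
      have := strong_apply_tendsto (S := P) (T := (1 : L2op)) (N1 := 0)
        (fun n _ => hPop n) h1 (hTconv g)
      simpa using this
    have hlimit : Tendsto (fun n => ((1 : ℂ) - b n * lam) •
        P n (Ring.inverse (1 - lam • Sn n) g) - res T lam g) atTop (𝓝 0) := by
      have h2 : Tendsto (fun n => ((1 : ℂ) - b n * lam) •
          P n (Ring.inverse (1 - lam • Sn n) g)) atTop
          (𝓝 ((1 : ℂ) • Ring.inverse (1 - lam • T) g)) := hdconv.smul hPR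
      rw [one_smul] at h2
      have h3 := h2.sub_const (res T lam g)
      have : Ring.inverse (1 - lam • T) g - res T lam g = 0 := by
        simp only [res]; rw [sub_self]
      rwa [this] at h3
    apply Tendsto.congr' _ hlimit
    filter_upwards [eventually_ge_atTop N2] with n hn
    rw [hvdef]
    simp only [(main n hn lam hlam).2]
  -- conclude
  rw [Metric.tendsto_atTop]
  intro ε hε
  have hε2 : (0:ℝ) < ε/2 := by linarith
  obtain ⟨N4, hN4⟩ := (unif_conv hKc hL0 hlip hpt (ε/2) hε2).exists_forall_of_atTop
  refine ⟨N4, fun n hn => ?_⟩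
  have hsup_le : (⨆ lam ∈ Kc, ‖res (P n * T) (lamn b lam n) (P n g) - res T lam g‖) ≤ ε/2 := by
    apply Real.iSup_le _ hε2.le
    intro lam
    apply Real.iSup_le _ hε2.le
    intro hlam
    exact hN4 n hn lam hlam
  have hsup_nonneg : (0:ℝ) ≤ ⨆ lam ∈ Kc,
      ‖res (P n * T) (lamn b lam n) (P n g) - res T lam g‖ := by
    apply Real.iSup_nonneg
    intro lam
    apply Real.iSup_nonneg
    intro _
    exact norm_nonneg _
  rw [Real.dist_eq, sub_zero, abs_of_nonneg hsup_nonneg]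
  calc (⨆ lam ∈ Kc, ‖res (P n * T) (lamn b lam n) (P n g) - res T lam g‖) ≤ ε/2 := hsup_le
    _ < ε := by linarith
end
end

section
/- Let T be a bounded linear operator on L² induced by a K⁰-kernel 𝐓 satisfying condition (iv), let {βₙ} be a complex sequence with βₙ → 0, and set λₙ(λ) = λ(1 − βₙλ)⁻¹. Then for each fixed λ ∈ ∇_s({βₙI + Tₙ}), one has λₙ(λ) ∈ Π(Tₙ) for all sufficiently large n, and sup_{s∈ℝ} ‖𝐭_{n|λₙ(λ)}(s) − 𝐭_{|λ}(s)‖_{L²} → 0 as n → ∞. -/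
open MeasureTheory Filter Topology ContinuousLinearMap
open scoped ENNReal NNReal

noncomputable section

section AuxLemmas

lemma chi_eq_ite (t x : ℝ) : chi t x = if x ∈ Set.Ioo (-t) t then 1 else 0 := by
  simp [chi, Set.indicator_apply]

lemma chi_cases (t x : ℝ) : chi t x = 0 ∨ chi t x = 1 := by
  rw [chi_eq_ite]; split <;> simp

lemma norm_chi_le (t x : ℝ) : ‖chi t x‖ ≤ 1 := by
  rcases chi_cases t x with h | h <;> simp [h]

lemma conj_chi (t x : ℝ) : (starRingEnd ℂ) (chi t x) = chi t x := by
  rcases chi_cases t x with h | h <;> simp [h]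

lemma chi_of_mem {t x : ℝ} (h : x ∈ Set.Ioo (-t) t) : chi t x = 1 := by
  rw [chi_eq_ite, if_pos h]

lemma chi_of_not_mem {t x : ℝ} (h : x ∉ Set.Ioo (-t) t) : chi t x = 0 := by
  rw [chi_eq_ite, if_neg h]

lemma measurable_chi (t : ℝ) : Measurable (chi t) :=
  Measurable.indicator measurable_const measurableSet_Ioo

lemma P_norm_apply_le (tau : ℝ) (Pn : L2op)
    (hproj : ∀ f : L2, (Pn f : ℝ → ℂ) =ᵐ[volume] fun x => chi tau x * (f : ℝ → ℂ) x)
    (f : L2) : ‖Pn f‖ ≤ ‖f‖ := by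
  rw [Lp.norm_def, Lp.norm_def]
  apply ENNReal.toReal_mono (Lp.eLpNorm_lt_top f).ne
  rw [eLpNorm_congr_ae (hproj f)]
  apply eLpNorm_mono_ae
  filter_upwards with x
  calc ‖chi tau x * (f : ℝ → ℂ) x‖ = ‖chi tau x‖ * ‖(f : ℝ → ℂ) x‖ := norm_mul _ _
  _ ≤ 1 * ‖(f : ℝ → ℂ) x‖ := by
      gcongr; exact norm_chi_le _ _
  _ = ‖(f : ℝ → ℂ) x‖ := one_mul _

lemma P_tendsto (tau : ℕ → ℝ) (P : ℕ → L2op)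
    (hproj : ∀ n, ∀ f : L2, (P n f : ℝ → ℂ) =ᵐ[volume] fun x => chi (tau n) x * (f : ℝ → ℂ) x)
    (htau : Tendsto tau atTop atTop) (g : L2) :
    Tendsto (fun n => P n g) atTop (𝓝 g) := by
  rw [tendsto_iff_norm_sub_tendsto_zero]
  have hae : ∀ n, ((P n g - g : L2) : ℝ → ℂ) =ᵐ[volume]
      fun x => (chi (tau n) x - 1) * (g : ℝ → ℂ) x := by
    intro n
    filter_upwards [Lp.coeFn_sub (P n g) g, hproj n g] with x h1 h2
    simp only [h1, Pi.sub_apply, h2, sub_mul, one_mul]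
  have hnorm : ∀ n, ‖P n g - g‖ =
      (eLpNorm (fun x => (chi (tau n) x - 1) * (g : ℝ → ℂ) x) 2 volume).toReal := by
    intro n; rw [Lp.norm_def, eLpNorm_congr_ae (hae n)]
  simp only [hnorm]
  have h2 : (2 : ℝ≥0∞) ≠ 0 := by norm_num
  have h2' : (2 : ℝ≥0∞) ≠ ⊤ := by norm_num
  -- the lintegrals tend to 0
  have hlin : Tendsto (fun n => ∫⁻ x, (‖(chi (tau n) x - 1) * (g : ℝ → ℂ) x‖₊ : ℝ≥0∞) ^ (2:ℝ) ∂volume)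
      atTop (𝓝 0) := by
    have h0 : (0 : ℝ≥0∞) = ∫⁻ (x : ℝ), (0:ℝ≥0∞) ∂volume := by simp
    rw [h0]
    apply tendsto_lintegral_of_dominated_convergence'
        (fun x => (‖(g : ℝ → ℂ) x‖₊ : ℝ≥0∞) ^ (2:ℝ))
    · intro n
      apply AEMeasurable.pow_const
      apply AEMeasurable.coe_nnreal_ennreal
      apply AEMeasurable.nnnorm
      exact (((measurable_chi (tau n)).sub measurable_const).aemeasurable.mul
        (Lp.aestronglyMeasurable g).aemeasurable)
    · intro n
      filter_upwards with x
      apply ENNReal.rpow_le_rpow _ (by norm_num)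
      rw [ENNReal.coe_le_coe]
      apply nnnorm_mul_le _ _ |>.trans
      have : ‖chi (tau n) x - 1‖₊ ≤ 1 := by
        rcases chi_cases (tau n) x with h | h <;>
          simp [h, nnnorm, norm] <;> norm_num
      calc ‖chi (tau n) x - 1‖₊ * ‖(g : ℝ → ℂ) x‖₊ ≤ 1 * ‖(g : ℝ → ℂ) x‖₊ := by gcongr
      _ = ‖(g : ℝ → ℂ) x‖₊ := one_mul _
    · -- integral of bound finite
      have := Lp.eLpNorm_lt_top g
      rw [eLpNorm_eq_lintegral_rpow_enorm_toReal h2 h2'] at this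
      simp only [enorm_eq_nnnorm] at this
      intro hcon
      rw [ENNReal.toReal_ofNat] at this
      rw [hcon] at this
      simp at this
    · -- ae tendsto
      filter_upwards with x
      have : ∀ᶠ n in atTop, (‖(chi (tau n) x - 1) * (g : ℝ → ℂ) x‖₊ : ℝ≥0∞) ^ (2:ℝ) = 0 := by
        filter_upwards [htau.eventually_gt_atTop (|x|)] with n hn
        have hx : x ∈ Set.Ioo (-(tau n)) (tau n) := by
          constructor
          · linarith [neg_abs_le x]
          · linarith [le_abs_self x]
        simp [chi_of_mem hx]
      exact Tendsto.congr' (this.mono fun n h => h.symm) tendsto_const_nhds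
  have : Tendsto (fun n => eLpNorm (fun x => (chi (tau n) x - 1) * (g : ℝ → ℂ) x) 2 volume)
      atTop (𝓝 0) := by
    have heq : ∀ n, eLpNorm (fun x => (chi (tau n) x - 1) * (g : ℝ → ℂ) x) 2 volume
        = (∫⁻ x, (‖(chi (tau n) x - 1) * (g : ℝ → ℂ) x‖₊ : ℝ≥0∞) ^ (2:ℝ) ∂volume) ^ (1/2 : ℝ) := by
      intro n; rw [eLpNorm_eq_lintegral_rpow_enorm_toReal h2 h2', ENNReal.toReal_ofNat]; simp only [enorm_eq_nnnorm]
    simp only [heq]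
    have : (0:ℝ≥0∞) = (0:ℝ≥0∞) ^ (1/2:ℝ) := by
      rw [ENNReal.zero_rpow_of_pos]; norm_num
    rw [this]
    exact (ENNReal.continuous_rpow_const.tendsto 0).comp hlin
  have := (ENNReal.tendsto_toReal (by norm_num : (0:ℝ≥0∞) ≠ ⊤)).comp this
  simpa [Function.comp_def] using this

lemma P_selfadjoint (tau : ℝ) (Pn : L2op)
    (hproj : ∀ f : L2, (Pn f : ℝ → ℂ) =ᵐ[volume] fun x => chi tau x * (f : ℝ → ℂ) x) :
    star Pn = Pn := by
  rw [ContinuousLinearMap.star_eq_adjoint]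
  symm
  rw [eq_adjoint_iff]
  intro x y
  rw [L2.inner_def, L2.inner_def]
  apply integral_congr_ae
  filter_upwards [hproj x, hproj y] with a h1 h2
  simp only [h1, h2, RCLike.inner_apply, map_mul, conj_chi]
  ring

lemma exists_bound_of_vanish (h : ℝ → L2) (hc : Continuous h)
    (hv : Tendsto h (cocompact ℝ) (𝓝 0)) : ∃ B : ℝ, 0 ≤ B ∧ ∀ s, ‖h s‖ ≤ B := by
  have : ∀ᶠ s in cocompact ℝ, ‖h s‖ ≤ 1 := by
    have := hv.norm
    simp only [norm_zero] at this
    exact this.eventually_le_const one_pos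
  obtain ⟨C, hCc, hC⟩ := mem_cocompact.mp this
  obtain ⟨B0, hB0⟩ := hCc.exists_bound_of_continuousOn hc.continuousOn
  refine ⟨max B0 1, by positivity, fun s => ?_⟩
  by_cases hs : s ∈ C
  · exact (hB0 s hs).trans (le_max_left _ _)
  · exact (hC hs).trans (le_max_right _ _)

/-- Uniform smallness of `E n (h s)` over all `s`, for an equibounded, pointwise-null
sequence of operators and a continuous vanishing-at-infinity family of vectors. -/
lemma unif_small (E : ℕ → L2op) (L : ℝ) (hL : 0 < L)
    (hLb : ∀ n (g : L2), ‖E n g‖ ≤ L * ‖g‖)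
    (hptw : ∀ g : L2, Tendsto (fun n => E n g) atTop (𝓝 0))
    (h : ℝ → L2) (hc : Continuous h) (hv : Tendsto h (cocompact ℝ) (𝓝 0))
    {ε : ℝ} (hε : 0 < ε) : ∀ᶠ n in atTop, ∀ s : ℝ, ‖E n (h s)‖ ≤ ε := by
  have hδ : 0 < ε / (2 * L) := by positivity
  have hvsmall : ∀ᶠ s in cocompact ℝ, ‖h s‖ ≤ ε / (2 * L) := by
    have := hv.norm
    simp only [norm_zero] at this
    exact this.eventually_le_const hδ
  obtain ⟨C, hCc, hC⟩ := mem_cocompact.mp hvsmall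
  have hK : IsCompact (h '' C) := hCc.image hc
  obtain ⟨t, htfin, htcov⟩ := (Metric.totallyBounded_iff.mp hK.totallyBounded) (ε / (2 * L)) hδ
  have hev : ∀ᶠ n in atTop, ∀ y ∈ t, ‖E n y‖ ≤ ε / 2 := by
    rw [eventually_all_finite htfin]
    intro y _
    have := (hptw y).norm
    simp only [norm_zero] at this
    exact this.eventually_le_const (by positivity)
  filter_upwards [hev] with n hn s
  by_cases hs : s ∈ C
  · obtain ⟨y, hy, hyb⟩ := Set.mem_iUnion₂.mp (htcov ⟨s, hs, rfl⟩)
    rw [Metric.mem_ball, dist_eq_norm] at hyb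
    calc ‖E n (h s)‖ = ‖E n (h s - y) + E n y‖ := by rw [← map_add, sub_add_cancel]
    _ ≤ ‖E n (h s - y)‖ + ‖E n y‖ := norm_add_le _ _
    _ ≤ L * ‖h s - y‖ + ε / 2 := add_le_add (hLb n _) (hn y hy)
    _ ≤ L * (ε / (2 * L)) + ε / 2 := by gcongr
    _ = ε := by field_simp; ring
  · calc ‖E n (h s)‖ ≤ L * ‖h s‖ := hLb n _
    _ ≤ L * (ε / (2 * L)) := by gcongr; exact hC hs
    _ = ε / 2 := by field_simp
    _ ≤ ε := by linarith

lemma ring_inverse_eq {A : Type*} [Ring A] {x y : A} (h1 : x * y = 1) (h2 : y * x = 1) :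
    Ring.inverse x = y := by
  have hu : IsUnit x := isUnit_iff_exists.mpr ⟨y, h1, h2⟩
  calc Ring.inverse x = Ring.inverse x * (x * y) := by rw [h1, mul_one]
  _ = (Ring.inverse x * x) * y := by rw [mul_assoc]
  _ = y := by rw [Ring.inverse_mul_cancel _ hu, one_mul]

lemma exists_strong_limit (F : ℕ → L2op) (M : ℝ) (hM : 0 ≤ M) (N : ℕ)
    (hbd : ∀ n, N < n → ‖F n‖ ≤ M)
    (hconv : ∀ f : L2, ∃ g : L2, Tendsto (fun n => F n f) atTop (𝓝 g)) :
    ∃ A : L2op, (∀ f, Tendsto (fun n => F n f) atTop (𝓝 (A f))) ∧ ‖A‖ ≤ M := by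
  have hlim : ∀ f : L2, Tendsto (fun n => F n f) atTop (𝓝 ((hconv f).choose)) :=
    fun f => (hconv f).choose_spec
  have hadd : ∀ f g : L2, (hconv (f + g)).choose = (hconv f).choose + (hconv g).choose := by
    intro f g
    exact tendsto_nhds_unique (by simpa [map_add] using hlim (f+g)) ((hlim f).add (hlim g))
  have hsmul : ∀ (c : ℂ) (f : L2), (hconv (c • f)).choose = c • (hconv f).choose := by
    intro c f
    exact tendsto_nhds_unique (by simpa [_root_.map_smul] using hlim (c • f)) ((hlim f).const_smul c)
  set A0 : L2 →ₗ[ℂ] L2 :=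
    { toFun := fun f => (hconv f).choose
      map_add' := hadd
      map_smul' := hsmul } with hA0
  have hnorm : ∀ f : L2, ‖A0 f‖ ≤ M * ‖f‖ := by
    intro f
    apply le_of_tendsto (hlim f).norm
    filter_upwards [eventually_gt_atTop N] with n hn
    calc ‖F n f‖ ≤ ‖F n‖ * ‖f‖ := (F n).le_opNorm f
    _ ≤ M * ‖f‖ := by gcongr; exact hbd n hn
  refine ⟨A0.mkContinuous M hnorm, fun f => hlim f, A0.mkContinuous_norm_le hM hnorm⟩

end AuxLemmas

set_option maxHeartbeats 4000000 in
theorem statement5 (T : L2op) (K : ℝ → ℝ → ℂ) (kt kt' : ℝ → L2)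
    (hK : IsK0Kernel K kt kt') (hT : IsInducedBy T K)
    (tau : ℕ → ℝ) (P : ℕ → L2op) (hiv : ConditionIV K T tau P)
    (b : ℕ → ℂ) (hb : Tendsto b atTop (𝓝 (0 : ℂ)))
    (lam : ℂ) (hlam : lam ∈ nablaS (fun n => b n • (1 : L2op) + P n * T)) :
    (∀ᶠ n in atTop, lamn b lam n ∈ regularSet (P n * T)) ∧
    Tendsto (fun n => ⨆ s : ℝ,
        ‖chi (tau n) s • (adjoint (res (P n * T) (lamn b lam n))) (kt s)
          - (adjoint (res T lam)) (kt s)‖)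
      atTop (𝓝 (0 : ℝ)) := by
  classical
  set S : ℕ → L2op := fun n => b n • 1 + P n * T with hS
  obtain ⟨⟨hne, M, hM, N, hbd⟩, hconv⟩ := hlam
  -- projection facts
  have hPt : ∀ g : L2, Tendsto (fun n => P n g) atTop (𝓝 g) :=
    P_tendsto tau P hiv.proj hiv.tendsto_top
  have hPle : ∀ n, ∀ f : L2, ‖P n f‖ ≤ ‖f‖ :=
    fun n f => P_norm_apply_le (tau n) (P n) (hiv.proj n) f
  have hPstar : ∀ n, star (P n) = P n := fun n => P_selfadjoint (tau n) (P n) (hiv.proj n)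
  -- strong limit A of the Fredholm resolvents of S n
  obtain ⟨A, hA, hAnorm⟩ := exists_strong_limit (fun n => fres (S n) lam) M hM.le N
      (fun n hn => (hbd n hn).2) hconv
  -- resolvent identities for S n, n > N
  have hresS : ∀ n, N < n → Ring.inverse (1 - lam • S n) = 1 + lam • fres (S n) lam := by
    intro n hn
    have hu : IsUnit (1 - lam • S n) := (hbd n hn).1
    have h1 : (1 - lam • S n) * Ring.inverse (1 - lam • S n) = 1 :=
      Ring.mul_inverse_cancel _ hu
    have h2 : (1 - lam • S n) * Ring.inverse (1 - lam • S n)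
        = Ring.inverse (1 - lam • S n) - lam • fres (S n) lam := by
      rw [sub_mul, one_mul, smul_mul_assoc]; rfl
    rw [h2] at h1
    exact eq_add_of_sub_eq h1
  have hfres1 : ∀ n, N < n →
      fres (S n) lam = S n + lam • (S n * fres (S n) lam) := by
    intro n hn
    calc fres (S n) lam = S n * Ring.inverse (1 - lam • S n) := rfl
    _ = S n * (1 + lam • fres (S n) lam) := by rw [hresS n hn]
    _ = S n + lam • (S n * fres (S n) lam) := by rw [mul_add, mul_one, mul_smul_comm]
  have hcommS : ∀ n, N < n → fres (S n) lam * S n = S n * fres (S n) lam := by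
    intro n hn
    have hu : IsUnit (1 - lam • S n) := (hbd n hn).1
    have hid : (1 - lam • S n) * S n = S n * (1 - lam • S n) := by
      rw [sub_mul, mul_sub, one_mul, mul_one, smul_mul_assoc, mul_smul_comm]
    have hcomm : S n * Ring.inverse (1 - lam • S n)
        = Ring.inverse (1 - lam • S n) * S n := by
      calc S n * Ring.inverse (1 - lam • S n)
          = (Ring.inverse (1 - lam • S n) * ((1 - lam • S n) * S n))
              * Ring.inverse (1 - lam • S n) := by
            rw [← mul_assoc, Ring.inverse_mul_cancel _ hu, one_mul]
      _ = (Ring.inverse (1 - lam • S n) * (S n * (1 - lam • S n)))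
              * Ring.inverse (1 - lam • S n) := by rw [hid]
      _ = (Ring.inverse (1 - lam • S n) * S n)
              * ((1 - lam • S n) * Ring.inverse (1 - lam • S n)) := by
            rw [mul_assoc, mul_assoc, mul_assoc]
      _ = Ring.inverse (1 - lam • S n) * S n := by
            rw [Ring.mul_inverse_cancel _ hu, mul_one]
    simp only [fres, res]
    rw [mul_assoc, ← hcomm]
  -- strong convergence of S n to T
  have hSf : ∀ f : L2, Tendsto (fun n => S n f) atTop (𝓝 (T f)) := by
    intro f
    have h1 : ∀ n, S n f = b n • f + P n (T f) := by
      intro n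
      simp [hS, ContinuousLinearMap.add_apply, ContinuousLinearMap.smul_apply,
        ContinuousLinearMap.one_apply, ContinuousLinearMap.mul_apply]
    simp only [h1]
    have := (hb.smul_const f).add (hPt (T f))
    simpa using this
  have hSbound : ∀ᶠ n in atTop, ∀ h : L2, ‖S n h‖ ≤ (‖T‖ + 1) * ‖h‖ := by
    have hb1 : ∀ᶠ n in atTop, ‖b n‖ ≤ 1 := by
      have := hb.norm
      simp only [norm_zero] at this
      exact this.eventually_le_const one_pos
    filter_upwards [hb1] with n hn h
    have h1 : S n h = b n • h + P n (T h) := by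
      simp [hS, ContinuousLinearMap.add_apply, ContinuousLinearMap.smul_apply,
        ContinuousLinearMap.one_apply, ContinuousLinearMap.mul_apply]
    calc ‖S n h‖ = ‖b n • h + P n (T h)‖ := by rw [h1]
    _ ≤ ‖b n • h‖ + ‖P n (T h)‖ := norm_add_le _ _
    _ ≤ ‖b n‖ * ‖h‖ + ‖T h‖ := by
        rw [norm_smul]; gcongr; exact hPle n (T h)
    _ ≤ 1 * ‖h‖ + ‖T‖ * ‖h‖ := by
        gcongr
        exact T.le_opNorm h
    _ = (‖T‖ + 1) * ‖h‖ := by ring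
  -- the two limit identities for A
  have hTA : A = T + lam • (T * A) := by
    refine ContinuousLinearMap.ext fun f => ?_
    have hlim1 : Tendsto (fun n => S n (fres (S n) lam f)) atTop (𝓝 (T (A f))) := by
      rw [tendsto_iff_norm_sub_tendsto_zero]
      have h1 : Tendsto (fun n => ‖fres (S n) lam f - A f‖) atTop (𝓝 0) := by
        have := (hA f).sub (tendsto_const_nhds (x := A f))
        simp only [sub_self] at this
        simpa only [norm_zero] using this.norm
      have h2 : Tendsto (fun n => ‖S n (A f) - T (A f)‖) atTop (𝓝 0) := by
        have := (hSf (A f)).sub (tendsto_const_nhds (x := T (A f)))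
        simp only [sub_self] at this
        simpa only [norm_zero] using this.norm
      have hg : Tendsto (fun n => (‖T‖ + 1) * ‖fres (S n) lam f - A f‖
          + ‖S n (A f) - T (A f)‖) atTop (𝓝 0) := by
        have := (h1.const_mul (‖T‖ + 1)).add h2
        simpa only [mul_zero, add_zero] using this
      have hle : ∀ᶠ n in atTop, ‖S n (fres (S n) lam f) - T (A f)‖
          ≤ (‖T‖ + 1) * ‖fres (S n) lam f - A f‖ + ‖S n (A f) - T (A f)‖ := by
        filter_upwards [hSbound] with n hn
        calc ‖S n (fres (S n) lam f) - T (A f)‖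
            = ‖S n (fres (S n) lam f - A f) + (S n (A f) - T (A f))‖ := by
              rw [map_sub]; congr 1; abel
        _ ≤ ‖S n (fres (S n) lam f - A f)‖ + ‖S n (A f) - T (A f)‖ := norm_add_le _ _
        _ ≤ (‖T‖ + 1) * ‖fres (S n) lam f - A f‖ + ‖S n (A f) - T (A f)‖ := by
              gcongr; exact hn _
      exact squeeze_zero' (Eventually.of_forall fun n => norm_nonneg _) hle hg
    have hlim2 : Tendsto (fun n => fres (S n) lam f) atTop
        (𝓝 (T f + lam • T (A f))) := by
      apply Tendsto.congr' ?_ ((hSf f).add (hlim1.const_smul lam))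
      filter_upwards [eventually_gt_atTop N] with n hn
      conv_rhs => rw [hfres1 n hn]
      simp only [ContinuousLinearMap.add_apply, ContinuousLinearMap.smul_apply,
        ContinuousLinearMap.mul_apply]
    have := tendsto_nhds_unique (hA f) hlim2
    simpa only [ContinuousLinearMap.add_apply, ContinuousLinearMap.smul_apply,
      ContinuousLinearMap.mul_apply] using this
  have hAT : A = T + lam • (A * T) := by
    refine ContinuousLinearMap.ext fun f => ?_
    have hlim1 : Tendsto (fun n => fres (S n) lam (S n f)) atTop (𝓝 (A (T f))) := by
      rw [tendsto_iff_norm_sub_tendsto_zero]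
      have h1 : Tendsto (fun n => ‖S n f - T f‖) atTop (𝓝 0) := by
        have := (hSf f).sub (tendsto_const_nhds (x := T f))
        simp only [sub_self] at this
        simpa only [norm_zero] using this.norm
      have h2 : Tendsto (fun n => ‖fres (S n) lam (T f) - A (T f)‖) atTop (𝓝 0) := by
        have := (hA (T f)).sub (tendsto_const_nhds (x := A (T f)))
        simp only [sub_self] at this
        simpa only [norm_zero] using this.norm
      have hg : Tendsto (fun n => M * ‖S n f - T f‖
          + ‖fres (S n) lam (T f) - A (T f)‖) atTop (𝓝 0) := by
        have := (h1.const_mul M).add h2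
        simpa only [mul_zero, add_zero] using this
      have hle : ∀ᶠ n in atTop, ‖fres (S n) lam (S n f) - A (T f)‖
          ≤ M * ‖S n f - T f‖ + ‖fres (S n) lam (T f) - A (T f)‖ := by
        filter_upwards [eventually_gt_atTop N] with n hn
        calc ‖fres (S n) lam (S n f) - A (T f)‖
            = ‖fres (S n) lam (S n f - T f) + (fres (S n) lam (T f) - A (T f))‖ := by
              rw [map_sub]; congr 1; abel
        _ ≤ ‖fres (S n) lam (S n f - T f)‖ + ‖fres (S n) lam (T f) - A (T f)‖ :=
              norm_add_le _ _
        _ ≤ M * ‖S n f - T f‖ + ‖fres (S n) lam (T f) - A (T f)‖ := by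
              gcongr
              calc ‖fres (S n) lam (S n f - T f)‖
                  ≤ ‖fres (S n) lam‖ * ‖S n f - T f‖ := le_opNorm _ _
              _ ≤ M * ‖S n f - T f‖ := by gcongr; exact (hbd n hn).2
      exact squeeze_zero' (Eventually.of_forall fun n => norm_nonneg _) hle hg
    have hlim2 : Tendsto (fun n => fres (S n) lam f) atTop
        (𝓝 (T f + lam • A (T f))) := by
      apply Tendsto.congr' ?_ ((hSf f).add (hlim1.const_smul lam))
      filter_upwards [eventually_gt_atTop N] with n hn
      have h3 : fres (S n) lam = S n + lam • (fres (S n) lam * S n) := by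
        rw [hcommS n hn]; exact hfres1 n hn
      conv_rhs => rw [h3]
      simp only [ContinuousLinearMap.add_apply, ContinuousLinearMap.smul_apply,
        ContinuousLinearMap.mul_apply]
    have := tendsto_nhds_unique (hA f) hlim2
    simpa only [ContinuousLinearMap.add_apply, ContinuousLinearMap.smul_apply,
      ContinuousLinearMap.mul_apply] using this
  -- lam is a regular value of T
  have he1 : (1 - lam • T) * (1 + lam • A) = 1 := by
    have expand : (1 - lam • T) * (1 + lam • A)
        = 1 + lam • (A - (T + lam • (T * A))) := by
      rw [sub_mul, mul_add, mul_add, one_mul, one_mul, mul_one, smul_mul_assoc,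
        mul_smul_comm, smul_sub, smul_add, smul_smul, mul_comm lam lam, ← smul_smul]
      abel
    rw [expand, ← hTA, sub_self, smul_zero, add_zero]
  have he2 : (1 + lam • A) * (1 - lam • T) = 1 := by
    have expand : (1 + lam • A) * (1 - lam • T)
        = 1 + lam • (A - (T + lam • (A * T))) := by
      rw [add_mul, mul_sub, mul_sub, one_mul, one_mul, mul_one, smul_mul_assoc,
        mul_smul_comm, smul_sub, smul_add, smul_smul, mul_comm lam lam, ← smul_smul]
      abel
    rw [expand, ← hAT, sub_self, smul_zero, add_zero]
  have hregT : IsUnit (1 - lam • T) := isUnit_iff_exists.mpr ⟨1 + lam • A, he1, he2⟩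
  have hresT : res T lam = 1 + lam • A := ring_inverse_eq he1 he2
  -- the resolvent of T and constants
  have hRu1 : (1 - lam • T) * res T lam = 1 := Ring.mul_inverse_cancel _ hregT
  have hRu2 : res T lam * (1 - lam • T) = 1 := Ring.inverse_mul_cancel _ hregT
  have hsR1 : star (res T lam) * star (1 - lam • T) = 1 := by
    rw [← star_mul, hRu1, star_one]
  have hsR2 : star (1 - lam • T) * star (res T lam) = 1 := by
    rw [← star_mul, hRu2, star_one]
  set MR : ℝ := 2 * (1 + ‖lam‖ * M) with hMRdef
  have hMRpos : 0 < MR := by positivity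
  set NR : ℝ := ‖star (res T lam)‖ with hNRdef
  have hNR0 : 0 ≤ NR := norm_nonneg _
  set TS : ℝ := ‖star T‖ with hTSdef
  have hTS0 : 0 ≤ TS := norm_nonneg _
  obtain ⟨B, hB0, hB⟩ := exists_bound_of_vanish kt hK.cont_t hK.vanish_t
  -- eventual factorization package
  have hfact : ∀ n, N < n → ‖b n * lam‖ ≤ 1/2 →
      IsUnit (1 - lamn b lam n • (P n * T)) ∧
      res (P n * T) (lamn b lam n) = (1 - b n * lam) • Ring.inverse (1 - lam • S n) ∧
      ‖res (P n * T) (lamn b lam n)‖ ≤ MR := by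
    intro n hn hsm
    have hcne : (1 - b n * lam) ≠ 0 := by
      intro h
      have h1 : b n * lam = 1 := by linear_combination -h
      rw [h1] at hsm
      rw [norm_one] at hsm
      norm_num at hsm
    have hu : IsUnit (1 - lam • S n) := (hbd n hn).1
    have hcmu : (1 - b n * lam) * lamn b lam n = lam := by
      simp only [lamn]
      field_simp
    have hE : (1 - b n * lam) • ((1:L2op) - lamn b lam n • (P n * T)) = 1 - lam • S n := by
      rw [smul_sub, smul_smul, hcmu, hS]
      simp only
      rw [smul_add, sub_smul, one_smul, smul_smul, mul_comm lam (b n)]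
      abel
    have hX1 : ((1:L2op) - lamn b lam n • (P n * T))
        * ((1 - b n * lam) • Ring.inverse (1 - lam • S n)) = 1 := by
      rw [mul_smul_comm, ← smul_mul_assoc, hE, Ring.mul_inverse_cancel _ hu]
    have hX2 : ((1 - b n * lam) • Ring.inverse (1 - lam • S n))
        * ((1:L2op) - lamn b lam n • (P n * T)) = 1 := by
      rw [smul_mul_assoc, ← mul_smul_comm, hE, Ring.inverse_mul_cancel _ hu]
    have hunitn : IsUnit ((1:L2op) - lamn b lam n • (P n * T)) :=
      isUnit_iff_exists.mpr ⟨_, hX1, hX2⟩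
    have hresn : res (P n * T) (lamn b lam n)
        = (1 - b n * lam) • Ring.inverse (1 - lam • S n) := by
      simp only [res]
      exact ring_inverse_eq hX1 hX2
    refine ⟨hunitn, hresn, ?_⟩
    rw [hresn]
    apply (ContinuousLinearMap.opNorm_smul_le _ _).trans
    have hc32 : ‖1 - b n * lam‖ ≤ 3/2 := by
      calc ‖1 - b n * lam‖ ≤ ‖(1:ℂ)‖ + ‖b n * lam‖ := norm_sub_le _ _
      _ ≤ 1 + 1/2 := by rw [norm_one]; gcongr
      _ = 3/2 := by norm_num
    have hinv : ‖Ring.inverse (1 - lam • S n)‖ ≤ 1 + ‖lam‖ * M := by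
      rw [hresS n hn]
      calc ‖(1:L2op) + lam • fres (S n) lam‖
          ≤ ‖(1:L2op)‖ + ‖lam • fres (S n) lam‖ := norm_add_le _ _
      _ ≤ 1 + ‖lam‖ * M := by
          apply add_le_add
          · rw [ContinuousLinearMap.one_def]
            exact ContinuousLinearMap.norm_id_le
          · apply (ContinuousLinearMap.opNorm_smul_le _ _).trans
            exact mul_le_mul_of_nonneg_left (hbd n hn).2 (norm_nonneg _)
    calc ‖1 - b n * lam‖ * ‖Ring.inverse (1 - lam • S n)‖
        ≤ (3/2) * (1 + ‖lam‖ * M) := by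
          apply mul_le_mul hc32 hinv (norm_nonneg _) (by norm_num)
    _ ≤ MR := by rw [hMRdef]; nlinarith [norm_nonneg lam, hM.le, mul_nonneg (norm_nonneg lam) hM.le]
  have hev_c : ∀ᶠ n in atTop, ‖b n * lam‖ ≤ 1/2 := by
    have h0 := (hb.mul_const lam).norm
    simp only [zero_mul, norm_zero] at h0
    exact h0.eventually_le_const (by norm_num)
  -- convergence of lamn to lam
  have hlamtend : Tendsto (fun n => lamn b lam n) atTop (𝓝 lam) := by
    have h1 : Tendsto (fun n => 1 - b n * lam) atTop (𝓝 1) := by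
      have h0 := (tendsto_const_nhds (x := (1:ℂ))).sub (hb.mul_const lam)
      simpa using h0
    have h2 := (h1.inv₀ one_ne_zero).const_mul lam
    simp only [inv_one, mul_one] at h2
    exact h2
  -- the operators measuring failure of commutation with projections
  have hEb : ∀ n, ∀ g : L2, ‖(star T * (P n - 1)) g‖ ≤ (2 * TS + 1) * ‖g‖ := by
    intro n g
    have h1 : (star T * (P n - 1)) g = star T (P n g - g) := by
      simp only [ContinuousLinearMap.mul_apply, ContinuousLinearMap.sub_apply,
        ContinuousLinearMap.one_apply]
    rw [h1]
    calc ‖star T (P n g - g)‖ ≤ TS * ‖P n g - g‖ := le_opNorm _ _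
    _ ≤ TS * (‖P n g‖ + ‖g‖) := by gcongr; exact norm_sub_le _ _
    _ ≤ TS * (‖g‖ + ‖g‖) := by gcongr; exact hPle n g
    _ ≤ (2 * TS + 1) * ‖g‖ := by nlinarith [norm_nonneg g]
  have hEp : ∀ g : L2, Tendsto (fun n => (star T * (P n - 1)) g) atTop (𝓝 0) := by
    intro g
    have h1 : ∀ n, (star T * (P n - 1)) g = star T (P n g - g) := by
      intro n
      simp only [ContinuousLinearMap.mul_apply, ContinuousLinearMap.sub_apply,
        ContinuousLinearMap.one_apply]
    simp only [h1]
    have h2 : Tendsto (fun n => P n g - g) atTop (𝓝 0) := by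
      have := (hPt g).sub (tendsto_const_nhds (x := g))
      simpa only [sub_self] using this
    have h3 := ((star T).continuous.tendsto 0).comp h2
    simpa only [map_zero, Function.comp_def] using h3
  have hfc : Continuous fun s : ℝ => star (res T lam) (kt s) :=
    (star (res T lam)).continuous.comp hK.cont_t
  have hfv : Tendsto (fun s : ℝ => star (res T lam) (kt s)) (cocompact ℝ) (𝓝 0) := by
    have := ((star (res T lam)).continuous.tendsto 0).comp hK.vanish_t
    simpa only [map_zero, Function.comp_def] using this
  -- the key uniform estimate
  have key : ∀ ε : ℝ, 0 < ε → ∀ᶠ n in atTop, ∀ s : ℝ,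
      ‖chi (tau n) s • star (res (P n * T) (lamn b lam n)) (kt s)
        - star (res T lam) (kt s)‖ ≤ ε := by
    intro ε hε
    have hδ1 : (0:ℝ) < ε / (6 * (MR + 1) * (TS + 1) * (NR + 1) * (B + 1)) := by positivity
    have hε3 : (0:ℝ) < ε / (3 * (MR + 1) * (‖lam‖ + 1)) := by positivity
    have hε1 : (0:ℝ) < ε / (3 * (NR + 1)) := by positivity
    -- tail of kt
    have hvan : ∀ᶠ s0 in cocompact ℝ, ‖kt s0‖ ≤ ε / (3 * (NR + 1)) := by
      have h0 := hK.vanish_t.norm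
      simp only [norm_zero] at h0
      exact h0.eventually_le_const hε1
    obtain ⟨C, hCc, hC⟩ := mem_cocompact.mp hvan
    obtain ⟨a, hCa⟩ := hCc.isBounded.subset_closedBall 0
    have hE4 : ∀ᶠ n in atTop, ‖lamn b lam n - lam‖
        ≤ ε / (6 * (MR + 1) * (TS + 1) * (NR + 1) * (B + 1)) := by
      have h0 := (hlamtend.sub (tendsto_const_nhds (x := lam))).norm
      simp only [sub_self, norm_zero] at h0
      exact h0.eventually_le_const hδ1
    have hE5 := unif_small (fun n => star T * (P n - 1)) (2 * TS + 1) (by positivity)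
        hEb hEp (fun s => star (res T lam) (kt s)) hfc hfv hε3
    filter_upwards [eventually_gt_atTop N, hev_c, hiv.tendsto_top.eventually_gt_atTop a,
      hE4, hE5] with n hn1 hn2 hn3 hn4 hn5
    intro s
    obtain ⟨hunitn, hresn, hRnbd⟩ := hfact n hn1 hn2
    by_cases hsin : s ∈ Set.Ioo (-(tau n)) (tau n)
    · -- inside the interval: use the resolvent identity
      rw [chi_of_mem hsin, one_smul]
      have hRn1 : ((1:L2op) - lamn b lam n • (P n * T)) * res (P n * T) (lamn b lam n) = 1 :=
        Ring.mul_inverse_cancel _ hunitn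
      have hRn2 : res (P n * T) (lamn b lam n) * ((1:L2op) - lamn b lam n • (P n * T)) = 1 :=
        Ring.inverse_mul_cancel _ hunitn
      have hsRn1 : star (res (P n * T) (lamn b lam n))
          * star ((1:L2op) - lamn b lam n • (P n * T)) = 1 := by
        rw [← star_mul, hRn1, star_one]
      have hid : star (res (P n * T) (lamn b lam n)) - star (res T lam)
          = star (res (P n * T) (lamn b lam n))
            * ((star ((1:L2op) - lam • T) - star ((1:L2op) - lamn b lam n • (P n * T)))
              * star (res T lam)) := by
        rw [sub_mul, mul_sub, hsR2, mul_one, ← mul_assoc, hsRn1, one_mul]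
      have hW : star ((1:L2op) - lam • T) - star ((1:L2op) - lamn b lam n • (P n * T))
          = star (lamn b lam n) • (star T * P n) - star lam • star T := by
        simp only [star_sub, star_one, star_smul, star_mul, hPstar n]
        abel
      rw [hW] at hid
      have happ : star (res (P n * T) (lamn b lam n)) (kt s) - star (res T lam) (kt s)
          = star (res (P n * T) (lamn b lam n))
              ((star (lamn b lam n) - star lam) • star T (P n (star (res T lam) (kt s)))
                + star lam • (star T ((P n) (star (res T lam) (kt s)))
                    - star T (star (res T lam) (kt s)))) := by
        have h0 := congrArg (fun X : L2op => X (kt s)) hid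
        simp only [ContinuousLinearMap.sub_apply, ContinuousLinearMap.mul_apply,
          ContinuousLinearMap.smul_apply] at h0
        rw [h0]
        refine congrArg _ ?_
        simp only [sub_smul, smul_sub]
        abel
      have hg : ‖star (res T lam) (kt s)‖ ≤ NR * B := by
        calc ‖star (res T lam) (kt s)‖ ≤ NR * ‖kt s‖ := le_opNorm _ _
        _ ≤ NR * B := by gcongr; exact hB s
      have hPg : ‖P n (star (res T lam) (kt s))‖ ≤ NR * B :=
        (hPle n _).trans hg
      have hdiff : star T (P n (star (res T lam) (kt s))) - star T (star (res T lam) (kt s))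
          = (star T * (P n - 1)) (star (res T lam) (kt s)) := by
        simp only [ContinuousLinearMap.mul_apply, ContinuousLinearMap.sub_apply,
          ContinuousLinearMap.one_apply, map_sub]
      set dl : ℝ := ε / (6 * (MR + 1) * (TS + 1) * (NR + 1) * (B + 1)) with hdl
      set e3 : ℝ := ε / (3 * (MR + 1) * (‖lam‖ + 1)) with he3
      have hvb : ‖(star (lamn b lam n) - star lam) • star T (P n (star (res T lam) (kt s)))
          + star lam • (star T (P n (star (res T lam) (kt s)))
              - star T (star (res T lam) (kt s)))‖
          ≤ dl * (TS * (NR * B)) + ‖lam‖ * e3 := by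
        apply (norm_add_le _ _).trans
        apply add_le_add
        · rw [norm_smul]
          have hc : ‖star (lamn b lam n) - star lam‖ = ‖lamn b lam n - lam‖ := by
            rw [← star_sub, norm_star]
          rw [hc]
          have h1 : ‖star T (P n (star (res T lam) (kt s)))‖ ≤ TS * (NR * B) := by
            calc ‖star T (P n (star (res T lam) (kt s)))‖
                ≤ TS * ‖P n (star (res T lam) (kt s))‖ := le_opNorm _ _
            _ ≤ TS * (NR * B) := mul_le_mul_of_nonneg_left hPg hTS0
          exact mul_le_mul hn4 h1 (norm_nonneg _) hδ1.le
        · rw [norm_smul, norm_star, hdiff]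
          exact mul_le_mul_of_nonneg_left (hn5 s) (norm_nonneg _)
      have h2e : ‖star (res (P n * T) (lamn b lam n))‖
          = ‖res (P n * T) (lamn b lam n)‖ := by
        exact norm_star (E := L2op) (res (P n * T) (lamn b lam n))
      have h2 : ‖star (res (P n * T) (lamn b lam n))‖ ≤ MR := h2e.trans_le hRnbd
      rw [happ]
      apply ((le_opNorm _ _).trans
        (mul_le_mul h2 hvb (norm_nonneg _) (by linarith))).trans
      calc MR * (dl * (TS * (NR * B)) + ‖lam‖ * e3)
          = MR * (dl * (TS * (NR * B))) + MR * (‖lam‖ * e3) := by ring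
      _ ≤ ε / 6 + ε / 3 := by
            have hMR1 : (0:ℝ) < MR + 1 := by linarith
            have hTS1 : (0:ℝ) < TS + 1 := by linarith
            have hNR1 : (0:ℝ) < NR + 1 := by linarith
            have hB1 : (0:ℝ) < B + 1 := by linarith
            have hlam1 : (0:ℝ) < ‖lam‖ + 1 := by positivity
            have k1 : MR * (dl * (TS * (NR * B))) ≤ ε / 6 := by
              have i3 : NR * B ≤ (NR + 1) * (B + 1) :=
                mul_le_mul (by linarith) (by linarith) hB0 (by linarith)
              have i2 : TS * (NR * B) ≤ (TS + 1) * ((NR + 1) * (B + 1)) :=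
                mul_le_mul (by linarith) i3 (mul_nonneg hNR0 hB0) (by linarith)
              have i1 : dl * (TS * (NR * B)) ≤ dl * ((TS + 1) * ((NR + 1) * (B + 1))) :=
                mul_le_mul_of_nonneg_left i2 hδ1.le
              have i0 : MR * (dl * (TS * (NR * B)))
                  ≤ (MR + 1) * (dl * ((TS + 1) * ((NR + 1) * (B + 1)))) :=
                mul_le_mul (by linarith) i1
                  (mul_nonneg hδ1.le (mul_nonneg hTS0 (mul_nonneg hNR0 hB0))) (by linarith)
              apply i0.trans
              have heq : (MR + 1) * (dl * ((TS + 1) * ((NR + 1) * (B + 1)))) = ε / 6 := by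
                rw [hdl]
                field_simp
              rw [heq]
            have k2 : MR * (‖lam‖ * e3) ≤ ε / 3 := by
              have i1 : ‖lam‖ * e3 ≤ (‖lam‖ + 1) * e3 :=
                mul_le_mul_of_nonneg_right (by linarith) hε3.le
              have i0 : MR * (‖lam‖ * e3) ≤ (MR + 1) * ((‖lam‖ + 1) * e3) :=
                mul_le_mul (by linarith) i1
                  (mul_nonneg (norm_nonneg _) hε3.le) (by linarith)
              apply i0.trans
              have heq : (MR + 1) * ((‖lam‖ + 1) * e3) = ε / 3 := by
                rw [he3]
                field_simp
              rw [heq]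
            linarith
      _ ≤ ε := by linarith
    · -- outside the interval
      rw [chi_of_not_mem hsin, zero_smul, zero_sub, norm_neg]
      have hsC : s ∉ C := by
        intro hsc
        have := hCa hsc
        rw [Metric.mem_closedBall, dist_zero_right, Real.norm_eq_abs] at this
        rcases abs_le.mp this with ⟨h1, h2⟩
        apply hsin
        constructor <;> [linarith; linarith]
      have hkt : ‖kt s‖ ≤ ε / (3 * (NR + 1)) := hC hsC
      calc ‖star (res T lam) (kt s)‖ ≤ NR * ‖kt s‖ := le_opNorm _ _
      _ ≤ NR * (ε / (3 * (NR + 1))) := by gcongr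
      _ ≤ (NR + 1) * (ε / (3 * (NR + 1))) := by gcongr; linarith
      _ = ε / 3 := by field_simp
      _ ≤ ε := by linarith
  -- conclusion
  constructor
  · filter_upwards [eventually_gt_atTop N, hev_c] with n h1 h2
    exact (hfact n h1 h2).1
  · rw [NormedAddCommGroup.tendsto_nhds_zero]
    intro ε hε
    filter_upwards [key (ε/2) (by positivity)] with n hn
    have h1 : (⨆ s : ℝ, ‖chi (tau n) s • (adjoint (res (P n * T) (lamn b lam n))) (kt s)
        - (adjoint (res T lam)) (kt s)‖) ≤ ε/2 := by
      apply Real.iSup_le _ (by positivity)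
      intro s
      rw [← ContinuousLinearMap.star_eq_adjoint, ← ContinuousLinearMap.star_eq_adjoint]
      exact hn s
    have h2 : (0:ℝ) ≤ ⨆ s : ℝ, ‖chi (tau n) s • (adjoint (res (P n * T) (lamn b lam n))) (kt s)
        - (adjoint (res T lam)) (kt s)‖ := Real.iSup_nonneg fun s => norm_nonneg _
    rw [Real.norm_eq_abs, abs_of_nonneg h2]
    linarith
end
end

section
/- Let T be a bounded linear operator on L² induced by a K⁰-kernel 𝐓 satisfying condition (iv), let {βₙ} be a complex sequence with βₙ → 0, and set λₙ(λ) = λ(1 − βₙλ)⁻¹. Then for every compact subset K of ∇_s({βₙI + Tₙ}) and each fixed s ∈ ℝ, sup_{λ∈K} ‖𝐭_{n|λₙ(λ)}(s) − 𝐭_{|λ}(s)‖_{L²} → 0 as n → ∞ (the quantity being defined for all sufficiently large n). -/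
open MeasureTheory Filter Topology ContinuousLinearMap
open scoped ENNReal NNReal

set_option maxHeartbeats 1000000

noncomputable section

section AuxLemmas

lemma res_def' (S : L2op) (z : ℂ) : res S z = Ring.inverse (1 - z • S) := rfl

lemma inv_eq_of_mul {A X : L2op} (hA : IsUnit A) (h1 : A * X = 1) : Ring.inverse A = X := by
  calc Ring.inverse A = Ring.inverse A * (A * X) := by rw [h1, mul_one]
  _ = (Ring.inverse A * A) * X := (mul_assoc _ _ _).symm
  _ = X := by rw [Ring.inverse_mul_cancel _ hA, one_mul]

lemma commute_inverse {S A : L2op} (hA : IsUnit A) (h : S * A = A * S) :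
    S * Ring.inverse A = Ring.inverse A * S := by
  have h1 := Ring.inverse_mul_cancel _ hA
  have h2 := Ring.mul_inverse_cancel _ hA
  calc S * Ring.inverse A = (Ring.inverse A * A) * (S * Ring.inverse A) := by rw [h1, one_mul]
  _ = Ring.inverse A * ((A * S) * Ring.inverse A) := by noncomm_ring
  _ = Ring.inverse A * ((S * A) * Ring.inverse A) := by rw [h]
  _ = Ring.inverse A * (S * (A * Ring.inverse A)) := by noncomm_ring
  _ = Ring.inverse A * S := by rw [h2, mul_one]

lemma res_mul {S : L2op} {z : ℂ} (h : IsUnit (1 - z • S)) :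
    (1 - z • S) * res S z = 1 := Ring.mul_inverse_cancel _ h
lemma mul_res {S : L2op} {z : ℂ} (h : IsUnit (1 - z • S)) :
    res S z * (1 - z • S) = 1 := Ring.inverse_mul_cancel _ h

lemma S_comm_res {S : L2op} {z : ℂ} (h : IsUnit (1 - z • S)) :
    S * res S z = res S z * S := by
  refine commute_inverse h ?_
  simp [mul_sub, sub_mul, mul_smul_comm, smul_mul_assoc]

lemma res_eq_one_add {S : L2op} {z : ℂ} (h : IsUnit (1 - z • S)) :
    res S z = 1 + z • fres S z := by
  have h0 : res S z * (1 - z • S) + z • (res S z * S) = res S z := by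
    simp [mul_sub, mul_smul_comm]
  rw [mul_res h] at h0
  rw [fres, S_comm_res h]
  exact h0.symm

lemma norm_res_le {S : L2op} {z : ℂ} (h : IsUnit (1 - z • S)) {M : ℝ}
    (hb : ‖fres S z‖ ≤ M) : ‖res S z‖ ≤ ‖(1 : L2op)‖ + ‖z‖ * M := by
  rw [res_eq_one_add h]
  refine (norm_add_le _ _).trans (add_le_add le_rfl ?_)
  refine (ContinuousLinearMap.opNorm_smul_le _ _).trans ?_
  gcongr

lemma smul_unit_inverse {A : L2op} {c : ℂ} (hc : c ≠ 0) (hA : IsUnit A) :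
    IsUnit (c • A) ∧ Ring.inverse (c • A) = c⁻¹ • Ring.inverse A := by
  have hu : IsUnit (c • A) := by
    obtain ⟨u, rfl⟩ := hA
    exact ⟨⟨c • (u : L2op), c⁻¹ • ((↑u⁻¹ : L2op)),
      by simp [smul_mul_assoc, mul_smul_comm, smul_smul, mul_inv_cancel₀ hc, inv_mul_cancel₀ hc],
      by simp [smul_mul_assoc, mul_smul_comm, smul_smul, mul_inv_cancel₀ hc, inv_mul_cancel₀ hc]⟩, rfl⟩
  refine ⟨hu, inv_eq_of_mul hu ?_⟩
  rw [smul_mul_assoc, mul_smul_comm, smul_smul, mul_inv_cancel₀ hc,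
    Ring.mul_inverse_cancel _ hA, one_smul]

lemma perturb {S : L2op} {z w : ℂ} {M : ℝ}
    (hz : IsUnit (1 - z • S)) (hb : ‖fres S z‖ ≤ M) (hd : ‖w - z‖ * M ≤ 1/2) :
    IsUnit (1 - w • S) ∧ ‖fres S w‖ ≤ (‖(1:L2op)‖ + 1) * M := by
  have hM : 0 ≤ M := le_trans (norm_nonneg _) hb
  have hnt : ‖(w - z) • fres S z‖ ≤ 1/2 := by
    refine le_trans (ContinuousLinearMap.opNorm_smul_le _ _) (le_trans (by gcongr) hd)
  have hnt1 : ‖(w - z) • fres S z‖ < 1 := lt_of_le_of_lt hnt (by norm_num)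
  have hut : IsUnit (1 - (w - z) • fres S z) := isUnit_one_sub_of_norm_lt_one hnt1
  have hfact : 1 - w • S = (1 - z • S) * (1 - (w - z) • fres S z) := by
    have h3 : (1 - z • S) * ((w - z) • fres S z) = (w - z) • S := by
      rw [mul_smul_comm, fres, ← mul_assoc]
      have h4 : (1 - z • S) * S = S * (1 - z • S) := by
        simp [mul_sub, sub_mul, mul_smul_comm, smul_mul_assoc]
      rw [h4, mul_assoc, res_mul hz, mul_one]
    rw [mul_sub, mul_one, h3, sub_smul]
    abel
  have huw : IsUnit (1 - w • S) := by rw [hfact]; exact hz.mul hut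
  refine ⟨huw, ?_⟩
  have hres : res S w = Ring.inverse (1 - (w - z) • fres S z) * res S z := by
    refine inv_eq_of_mul huw ?_
    rw [hfact, mul_assoc, ← mul_assoc (1 - (w - z) • fres S z),
      Ring.mul_inverse_cancel _ hut, one_mul, res_mul hz]
  have hScomm : S * Ring.inverse (1 - (w - z) • fres S z)
      = Ring.inverse (1 - (w - z) • fres S z) * S := by
    refine commute_inverse hut ?_
    have h1 : S * ((w - z) • fres S z) = ((w - z) • fres S z) * S := by
      rw [mul_smul_comm, smul_mul_assoc]
      congr 1
      rw [fres, mul_assoc, ← S_comm_res hz]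
    simp only [mul_sub, sub_mul, mul_one, one_mul, h1]
  have hfw : fres S w = Ring.inverse (1 - (w - z) • fres S z) * fres S z := by
    rw [fres, hres, ← mul_assoc, hScomm, mul_assoc]; rfl
  rw [hfw]
  have hinv : ‖Ring.inverse ((1:L2op) - (w - z) • fres S z)‖ ≤ ‖(1:L2op)‖ + 1 := by
    have hg := tsum_geometric_le_of_norm_lt_one ((w - z) • fres S z) hnt1
    rw [geom_series_eq_inverse _ hnt1] at hg
    have h2 : (1 - ‖(w - z) • fres S z‖)⁻¹ ≤ 2 := by
      rw [inv_le_comm₀ (by linarith) (by norm_num)]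
      linarith
    linarith
  calc ‖Ring.inverse (1 - (w - z) • fres S z) * fres S z‖
      ≤ ‖Ring.inverse ((1:L2op) - (w - z) • fres S z)‖ * ‖fres S z‖ := norm_mul_le _ _
  _ ≤ (‖(1:L2op)‖ + 1) * M := by gcongr

lemma chi_eq_one {t x : ℝ} (h : |x| < t) : chi t x = 1 := by
  rw [abs_lt] at h
  unfold chi
  rw [Set.indicator_of_mem]
  · rfl
  · exact ⟨by linarith [h.1], h.2⟩

variable {tau : ℕ → ℝ} {P : ℕ → L2op}

lemma Pnorm (hproj : ∀ n, ∀ f : L2, (P n f : ℝ → ℂ) =ᵐ[volume] fun x => chi (tau n) x * (f : ℝ → ℂ) x)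
    (n : ℕ) (f : L2) : ‖P n f‖ ≤ ‖f‖ := by
  refine Lp.norm_le_norm_of_ae_le ?_
  filter_upwards [hproj n f] with x hx
  rw [hx]
  calc ‖chi (tau n) x * (f : ℝ → ℂ) x‖ = ‖chi (tau n) x‖ * ‖(f : ℝ → ℂ) x‖ := norm_mul _ _
  _ ≤ 1 * ‖(f : ℝ → ℂ) x‖ := by gcongr; exact norm_chi_le _ _
  _ = _ := one_mul _

lemma Pself (hproj : ∀ n, ∀ f : L2, (P n f : ℝ → ℂ) =ᵐ[volume] fun x => chi (tau n) x * (f : ℝ → ℂ) x)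
    (n : ℕ) : ContinuousLinearMap.adjoint (P n) = P n := by
  symm
  rw [ContinuousLinearMap.eq_adjoint_iff]
  intro x y
  rw [MeasureTheory.L2.inner_def, MeasureTheory.L2.inner_def]
  refine integral_congr_ae ?_
  filter_upwards [hproj n x, hproj n y] with a h1 h2
  simp only [h1, h2, RCLike.inner_apply, map_mul, conj_chi]
  ring

lemma Ptend (hproj : ∀ n, ∀ f : L2, (P n f : ℝ → ℂ) =ᵐ[volume] fun x => chi (tau n) x * (f : ℝ → ℂ) x)
    (htau : Tendsto tau atTop atTop) (f : L2) :
    Tendsto (fun n => P n f) atTop (𝓝 f) := by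
  rw [tendsto_iff_norm_sub_tendsto_zero]
  have key : ∀ n, ‖P n f - f‖
      = (eLpNorm (fun x => (chi (tau n) x - 1) * (f : ℝ → ℂ) x) 2 volume).toReal := by
    intro n
    rw [Lp.norm_def]
    congr 1
    refine eLpNorm_congr_ae ?_
    filter_upwards [Lp.coeFn_sub (P n f) f, hproj n f] with x h1 h2
    rw [h1]
    simp only [Pi.sub_apply, h2, sub_mul, one_mul]
  have h0 : Tendsto (fun n => eLpNorm (fun x => (chi (tau n) x - 1) * (f : ℝ → ℂ) x) 2 volume)
      atTop (𝓝 0) := by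
    have heq : ∀ n, eLpNorm (fun x => (chi (tau n) x - 1) * (f : ℝ → ℂ) x) 2 volume
        = (∫⁻ x, (‖(chi (tau n) x - 1) * (f : ℝ → ℂ) x‖₊ : ℝ≥0∞) ^ (2:ℝ)) ^ (1/(2:ℝ)) := by
      intro n
      rw [eLpNorm_eq_lintegral_rpow_enorm_toReal (by norm_num) (by norm_num)]
      norm_num
      rfl
    simp_rw [heq]
    have hlim : Tendsto (fun n => ∫⁻ x, (‖(chi (tau n) x - 1) * (f : ℝ → ℂ) x‖₊ : ℝ≥0∞) ^ (2:ℝ))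
        atTop (𝓝 0) := by
      have hbound_int : ∫⁻ x, (‖(f : ℝ → ℂ) x‖₊ : ℝ≥0∞) ^ (2:ℝ) < ⊤ := by
        have := lintegral_rpow_enorm_lt_top_of_eLpNorm_lt_top (f := ((f : ℝ → ℂ)))
          (p := 2) (by norm_num) (by norm_num) (Lp.memLp f).eLpNorm_lt_top
        simp at this ⊢
        exact this
      have := tendsto_lintegral_of_dominated_convergence'
        (F := fun n x => (‖(chi (tau n) x - 1) * (f : ℝ → ℂ) x‖₊ : ℝ≥0∞) ^ (2:ℝ))
        (f := fun _ => (0:ℝ≥0∞))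
        (bound := fun x => (‖(f : ℝ → ℂ) x‖₊ : ℝ≥0∞) ^ (2:ℝ))
        ?_ ?_ hbound_int.ne ?_
      · simpa using this
      · intro n
        have hf : AEStronglyMeasurable (f : ℝ → ℂ) volume := (Lp.memLp f).aestronglyMeasurable
        have hchi : Measurable (fun x => chi (tau n) x - 1) :=
          (measurable_const.indicator measurableSet_Ioo).sub measurable_const
        have hmul : AEStronglyMeasurable (fun x => (chi (tau n) x - 1) * (f : ℝ → ℂ) x) volume :=
          hchi.aestronglyMeasurable.mul hf
        exact ENNReal.continuous_rpow_const.measurable.comp_aemeasurable hmul.enorm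
      · intro n
        filter_upwards with x
        refine ENNReal.rpow_le_rpow ?_ (by norm_num)
        rw [ENNReal.coe_le_coe]
        rcases chi_cases (tau n) x with h | h <;> rw [h] <;> simp
      · filter_upwards with x
        have hev : ∀ᶠ n in atTop, (‖(chi (tau n) x - 1) * (f : ℝ → ℂ) x‖₊ : ℝ≥0∞) ^ (2:ℝ) = 0 := by
          have : ∀ᶠ n in atTop, |x| < tau n := htau.eventually (eventually_gt_atTop |x|)
          filter_upwards [this] with n hn
          rw [chi_eq_one hn]
          simp
        exact Tendsto.congr' (EventuallyEq.symm hev) tendsto_const_nhds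
    have hc : Tendsto (fun y : ℝ≥0∞ => y ^ (1/(2:ℝ))) (𝓝 0) (𝓝 0) := by
      have := (ENNReal.continuous_rpow_const (y := 1/(2:ℝ))).tendsto 0
      simpa [ENNReal.zero_rpow_of_pos] using this
    exact hc.comp hlim
  have hfin := (ENNReal.tendsto_toReal (a := 0) (by simp)).comp h0
  have hkey : (fun n => ‖P n f - f‖)
      = fun n => (eLpNorm (fun x => (chi (tau n) x - 1) * (f : ℝ → ℂ) x) 2 volume).toReal :=
    funext key
  rw [hkey]
  simpa [Function.comp_def] using hfin

lemma Punif (hproj : ∀ n, ∀ f : L2, (P n f : ℝ → ℂ) =ᵐ[volume] fun x => chi (tau n) x * (f : ℝ → ℂ) x)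
    (htau : Tendsto tau atTop atTop) {W : Set L2} (hW : IsCompact W) {ε : ℝ} (hε : 0 < ε) :
    ∀ᶠ n in atTop, ∀ w ∈ W, ‖P n w - w‖ ≤ ε := by
  obtain ⟨t, htfin, htsub⟩ := (Metric.totallyBounded_iff.1 hW.totallyBounded) (ε/3) (by linarith)
  have hev : ∀ᶠ n in atTop, ∀ y ∈ t, ‖P n y - y‖ ≤ ε/3 := by
    rw [Filter.eventually_all_finite htfin]
    intro y hy
    have hnorm : Tendsto (fun n => ‖P n y - y‖) atTop (𝓝 0) :=
      tendsto_iff_norm_sub_tendsto_zero.1 (Ptend hproj htau y)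
    filter_upwards [hnorm.eventually_le_const (by linarith : (0:ℝ) < ε/3)] with n hn
    exact hn
  filter_upwards [hev] with n hn w hw
  obtain ⟨y, hyt, hwy⟩ := Set.mem_iUnion₂.1 (htsub hw)
  have hdist : ‖w - y‖ < ε/3 := by
    rw [← dist_eq_norm]; exact Metric.mem_ball.1 hwy
  have hsplit : P n w - w = P n (w - y) + (P n y - y) + (y - w) := by
    rw [map_sub]; abel
  rw [hsplit]
  refine (norm_add₃_le).trans ?_
  have h1 : ‖P n (w - y)‖ ≤ ‖w - y‖ := Pnorm hproj n _
  have h2 : ‖P n y - y‖ ≤ ε/3 := hn y hyt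
  have h3 : ‖y - w‖ < ε/3 := by rw [norm_sub_rev]; exact hdist
  linarith

lemma uniform_bound {S : ℕ → L2op} {Kc : Set ℂ} (hKc : IsCompact Kc)
    (h : ∀ z ∈ Kc, z ∈ nablaB S) :
    ∃ (N : ℕ) (M : ℝ), 0 < M ∧ ∀ n > N, ∀ z ∈ Kc,
      IsUnit (1 - z • S n) ∧ ‖fres (S n) z‖ ≤ M := by
  have h' : ∀ z : ℂ, ∃ (M : ℝ) (N : ℕ), 0 < M ∧
      (z ∈ Kc → ∀ n > N, IsUnit (1 - z • S n) ∧ ‖fres (S n) z‖ ≤ M) := by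
    intro z
    by_cases hz : z ∈ Kc
    · obtain ⟨-, M, hM, N, hN⟩ := h z hz
      exact ⟨M, N, hM, fun _ n hn => hN n hn⟩
    · exact ⟨1, 0, one_pos, fun hzz => absurd hzz hz⟩
  choose Mf Nf hMf hbf using h'
  have hcover : Kc ⊆ ⋃ z ∈ Kc, Metric.ball z (1/(2 * Mf z)) := by
    intro z hz
    refine Set.mem_biUnion hz ?_
    simp only [Metric.mem_ball, dist_self]
    have := hMf z
    positivity
  obtain ⟨t, htsub, htfin, hcov⟩ := hKc.elim_finite_subcover_image
    (fun z _ => Metric.isOpen_ball) hcover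
  refine ⟨htfin.toFinset.sup Nf, (‖(1:L2op)‖ + 1) * (1 + ∑ z ∈ htfin.toFinset, Mf z),
    ?_, ?_⟩
  · have h1 : (0:ℝ) < 1 + ∑ z ∈ htfin.toFinset, Mf z := by
      have : (0:ℝ) ≤ ∑ z ∈ htfin.toFinset, Mf z :=
        Finset.sum_nonneg fun z _ => (hMf z).le
      linarith
    have h2 : (0:ℝ) < ‖(1:L2op)‖ + 1 := by positivity
    positivity
  · intro n hn z hz
    obtain ⟨z₀, hz₀t, hzball⟩ := Set.mem_iUnion₂.1 (hcov hz)
    have hz₀K : z₀ ∈ Kc := htsub hz₀t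
    have hn₀ : n > Nf z₀ := lt_of_le_of_lt (Finset.le_sup (htfin.mem_toFinset.2 hz₀t)) hn
    obtain ⟨hu₀, hb₀⟩ := hbf z₀ hz₀K n hn₀
    have hd : ‖z - z₀‖ * Mf z₀ ≤ 1/2 := by
      have hball : dist z z₀ < 1/(2 * Mf z₀) := Metric.mem_ball.1 hzball
      rw [dist_eq_norm] at hball
      have hMp := hMf z₀
      rw [lt_div_iff₀ (by positivity)] at hball
      nlinarith [norm_nonneg (z - z₀)]
    obtain ⟨hu, hbd⟩ := perturb hu₀ hb₀ hd
    refine ⟨hu, hbd.trans ?_⟩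
    have hle : Mf z₀ ≤ 1 + ∑ w ∈ htfin.toFinset, Mf w := by
      have : Mf z₀ ≤ ∑ w ∈ htfin.toFinset, Mf w :=
        Finset.single_le_sum (fun w _ => (hMf w).le) (htfin.mem_toFinset.2 hz₀t)
      linarith
    gcongr

lemma limit_unit {S : ℕ → L2op} {T : L2op} {z : ℂ} {M C : ℝ} {N : ℕ}
    (hreg : ∀ n > N, IsUnit (1 - z • S n) ∧ ‖res (S n) z‖ ≤ M)
    (hstrong : ∀ f : L2, ∃ g : L2, Tendsto (fun n => res (S n) z f) atTop (𝓝 g))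
    (hSlim : ∀ f : L2, Tendsto (fun n => S n f) atTop (𝓝 (T f)))
    (hSbdd : ∀ n, ‖S n‖ ≤ C) :
    IsUnit (1 - z • T) := by
  have hM : 0 ≤ M := by
    have h0 := hreg (N+1) (Nat.lt_succ_self N)
    exact le_trans (norm_nonneg _) h0.2
  choose g hg using hstrong
  have hadd : ∀ f1 f2 : L2, g (f1 + f2) = g f1 + g f2 := by
    intro f1 f2
    refine tendsto_nhds_unique (hg (f1 + f2)) ?_
    have := (hg f1).add (hg f2)
    simpa [map_add] using this
  have hsmul : ∀ (c : ℂ) (f : L2), g (c • f) = c • g f := by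
    intro c f
    refine tendsto_nhds_unique (hg (c • f)) ?_
    have := (hg f).const_smul c
    simpa [_root_.map_smul] using this
  have hbound : ∀ f : L2, ‖g f‖ ≤ M * ‖f‖ := by
    intro f
    refine le_of_tendsto (hg f).norm ?_
    filter_upwards [eventually_gt_atTop N] with n hn
    exact ((res (S n) z).le_opNorm f).trans (by gcongr; exact (hreg n hn).2)
  let Q : L2 →ₗ[ℂ] L2 :=
    { toFun := g, map_add' := hadd, map_smul' := hsmul }
  let Qc : L2op := Q.mkContinuous M hbound
  have hQc : ∀ f, Qc f = g f := fun f => rfl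
  have hC : (0:ℝ) ≤ C := le_trans (norm_nonneg _) (hSbdd 0)
  have hright : (1 - z • T) * Qc = 1 := by
    refine ContinuousLinearMap.ext fun f => ?_
    rw [ContinuousLinearMap.mul_apply, ContinuousLinearMap.one_apply]
    have hcont : Tendsto (fun n => (1 - z • T) (res (S n) z f)) atTop (𝓝 ((1 - z • T) (g f))) :=
      ((1 - z • T).continuous.tendsto _).comp (hg f)
    have hd : Tendsto (fun n => S n (res (S n) z f) - T (res (S n) z f)) atTop (𝓝 0) := by
      have h1 : Tendsto (fun n => S n (res (S n) z f) - S n (g f)) atTop (𝓝 0) := by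
        have hb' : ∀ n, ‖S n (res (S n) z f) - S n (g f)‖ ≤ C * ‖res (S n) z f - g f‖ := by
          intro n
          rw [← map_sub]
          exact ((S n).le_opNorm _).trans (by gcongr; exact hSbdd n)
        have hg' : Tendsto (fun n => C * ‖res (S n) z f - g f‖) atTop (𝓝 0) := by
          have h6 : Tendsto (fun n => res (S n) z f - g f) atTop (𝓝 0) := by
            simpa using (hg f).sub_const (g f)
          simpa using h6.norm.const_mul C
        exact squeeze_zero_norm hb' hg'
      have h2 : Tendsto (fun n => S n (g f) - T (g f)) atTop (𝓝 0) := by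
        simpa using (hSlim (g f)).sub_const (T (g f))
      have h3 : Tendsto (fun n => T (g f) - T (res (S n) z f)) atTop (𝓝 0) := by
        have hT : Tendsto (fun n => T (res (S n) z f)) atTop (𝓝 (T (g f))) :=
          (T.continuous.tendsto _).comp (hg f)
        have := hT.const_sub (T (g f))
        simpa using this
      have := (h1.add h2).add h3
      simpa using this.congr (fun n => by abel)
    have hlim2 : Tendsto (fun n => (1 - z • T) (res (S n) z f)) atTop (𝓝 f) := by
      have hev : (fun n => (1 - z • T) (res (S n) z f))
          =ᶠ[atTop] (fun n => f + z • (S n (res (S n) z f) - T (res (S n) z f))) := by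
        filter_upwards [eventually_gt_atTop N] with n hn
        have hu := (hreg n hn).1
        set u := res (S n) z f with hu'
        have h0 : u - z • S n u = f := by
          have h := Ring.mul_inverse_cancel _ hu
          have h2 : ((1 - z • S n) * res (S n) z) f = (1 : L2op) f := by
            rw [res_def', h]
          simpa [ContinuousLinearMap.mul_apply, ContinuousLinearMap.sub_apply,
            ContinuousLinearMap.one_apply, ContinuousLinearMap.smul_apply, hu'] using h2
        simp only [ContinuousLinearMap.sub_apply, ContinuousLinearMap.one_apply,
          ContinuousLinearMap.smul_apply, smul_sub]
        rw [← h0]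
        abel
      refine Tendsto.congr' hev.symm ?_
      have h7 : Tendsto (fun n => z • (S n (res (S n) z f) - T (res (S n) z f))) atTop (𝓝 0) := by
        have := hd.const_smul z
        simpa using this
      simpa using tendsto_const_nhds.add h7
    exact tendsto_nhds_unique hcont hlim2
  have hleft : Qc * (1 - z • T) = 1 := by
    refine ContinuousLinearMap.ext fun f => ?_
    rw [ContinuousLinearMap.mul_apply, ContinuousLinearMap.one_apply, hQc]
    have hcont : Tendsto (fun n => res (S n) z ((1 - z • T) f)) atTop (𝓝 (g ((1 - z • T) f))) :=
      hg _
    have hlim2 : Tendsto (fun n => res (S n) z ((1 - z • T) f)) atTop (𝓝 f) := by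
      have hev : (fun n => res (S n) z ((1 - z • T) f))
          =ᶠ[atTop] (fun n => f + res (S n) z (z • (S n f - T f))) := by
        filter_upwards [eventually_gt_atTop N] with n hn
        have hu := (hreg n hn).1
        have h0 : res (S n) z ((1 - z • S n) f) = f := by
          have h := Ring.inverse_mul_cancel _ hu
          have h2 : (res (S n) z * (1 - z • S n)) f = (1 : L2op) f := by
            rw [res_def', h]
          simpa [ContinuousLinearMap.mul_apply] using h2
        have hdec : (1 - z • T) f = (1 - z • S n) f + z • (S n f - T f) := by
          simp only [ContinuousLinearMap.sub_apply, ContinuousLinearMap.one_apply,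
            ContinuousLinearMap.smul_apply, smul_sub]
          abel
        rw [hdec, map_add, h0]
      refine Tendsto.congr' hev.symm ?_
      have h4 : Tendsto (fun n => res (S n) z (z • (S n f - T f))) atTop (𝓝 0) := by
        have hb' : ∀ᶠ n in atTop,
            ‖res (S n) z (z • (S n f - T f))‖ ≤ M * ‖z • (S n f - T f)‖ := by
          filter_upwards [eventually_gt_atTop N] with n hn
          exact ((res (S n) z).le_opNorm _).trans (by gcongr; exact (hreg n hn).2)
        have h5 : Tendsto (fun n => M * ‖z • (S n f - T f)‖) atTop (𝓝 0) := by
          have h6 : Tendsto (fun n => z • (S n f - T f)) atTop (𝓝 0) := by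
            have := ((hSlim f).sub_const (T f)).const_smul z
            simpa using this
          simpa using h6.norm.const_mul M
        exact squeeze_zero_norm' hb' h5
      simpa using tendsto_const_nhds.add h4
    exact tendsto_nhds_unique hcont hlim2
  exact ⟨⟨1 - z • T, Qc, hright, hleft⟩, rfl⟩

lemma res_diff {T1 T2 : L2op} {z1 z2 : ℂ} (h1 : IsUnit (1 - z1 • T1))
    (h2 : IsUnit (1 - z2 • T2)) :
    res T2 z2 - res T1 z1 = res T1 z1 * ((z2 • T2) - (z1 • T1)) * res T2 z2 := by
  have hA : res T1 z1 * (1 - z1 • T1) = 1 := Ring.inverse_mul_cancel _ h1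
  have hB : (1 - z2 • T2) * res T2 z2 = 1 := Ring.mul_inverse_cancel _ h2
  have hd : (z2 • T2) - (z1 • T1) = (1 - z1 • T1) - (1 - z2 • T2) := by abel
  rw [hd]
  refine Eq.symm ?_
  calc res T1 z1 * ((1 - z1 • T1) - (1 - z2 • T2)) * res T2 z2
      = (res T1 z1 * (1 - z1 • T1)) * res T2 z2
        - res T1 z1 * ((1 - z2 • T2) * res T2 z2) := by noncomm_ring
  _ = res T2 z2 - res T1 z1 := by rw [hA, hB, one_mul, mul_one]

lemma adj_mul (A B : L2op) : adjoint (A * B) = adjoint B * adjoint A :=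
  ContinuousLinearMap.adjoint_comp A B

lemma adj_smul (c : ℂ) (A : L2op) : adjoint (c • A) = (starRingEnd ℂ c) • adjoint A := by
  rw [← ContinuousLinearMap.star_eq_adjoint, ← ContinuousLinearMap.star_eq_adjoint, star_smul]
  rfl

lemma adj_sub (A B : L2op) : adjoint (A - B) = adjoint A - adjoint B := by
  simp only [← ContinuousLinearMap.star_eq_adjoint, star_sub]

lemma adj_norm (A : L2op) : ‖adjoint A‖ = ‖A‖ :=
  (ContinuousLinearMap.adjoint (𝕜 := ℂ) (E := L2) (F := L2)).norm_map A

lemma scalar_factor (bn lam : ℂ) (hc : (1 : ℂ) - bn * lam ≠ 0) (Tn : L2op) :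
    1 - (lam * ((1 : ℂ) - bn * lam)⁻¹) • Tn
      = ((1 : ℂ) - bn * lam)⁻¹ • (1 - lam • (bn • (1 : L2op) + Tn)) := by
  match_scalars <;> field_simp <;> ring

end AuxLemmas

theorem statement6 (T : L2op) (K : ℝ → ℝ → ℂ) (kt kt' : ℝ → L2)
    (hK : IsK0Kernel K kt kt') (hT : IsInducedBy T K)
    (tau : ℕ → ℝ) (P : ℕ → L2op) (hiv : ConditionIV K T tau P)
    (b : ℕ → ℂ) (hb : Tendsto b atTop (𝓝 (0 : ℂ)))
    (Kc : Set ℂ) (hKc : IsCompact Kc) (hKcsub : Kc ⊆ nablaS (fun n => b n • (1 : L2op) + P n * T)) (s : ℝ) :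
    (∀ᶠ n in atTop, ∀ lam ∈ Kc, lamn b lam n ∈ regularSet (P n * T)) ∧
    Tendsto (fun n => ⨆ lam ∈ Kc,
        ‖chi (tau n) s • (adjoint (res (P n * T) (lamn b lam n))) (kt s)
          - (adjoint (res T lam)) (kt s)‖)
      atTop (𝓝 (0 : ℝ)) := by
  classical
  set Sn : ℕ → L2op := fun n => b n • (1 : L2op) + P n * T with hSn
  have hproj := hiv.proj
  have htau := hiv.tendsto_top
  -- bound on Kc
  obtain ⟨C0, hC0⟩ := hKc.isBounded.exists_norm_le
  set C : ℝ := max C0 1 with hCdef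
  have hC : ∀ z ∈ Kc, ‖z‖ ≤ C := fun z hz => (hC0 z hz).trans (le_max_left _ _)
  have hC1 : (1:ℝ) ≤ C := le_max_right _ _
  have hCpos : (0:ℝ) < C := lt_of_lt_of_le one_pos hC1
  -- uniform resolvent bound for Sn on Kc
  obtain ⟨N, M, hM, hNM⟩ := uniform_bound hKc (fun z hz => (hKcsub hz).1)
  set M1 : ℝ := ‖(1:L2op)‖ + C * M with hM1def
  have hM1pos : 0 < M1 := by
    have h1 : (0:ℝ) ≤ ‖(1:L2op)‖ := norm_nonneg _
    have : 0 < C * M := mul_pos hCpos hM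
    linarith
  have hresb : ∀ n > N, ∀ z ∈ Kc, ‖res (Sn n) z‖ ≤ M1 := by
    intro n hn z hz
    obtain ⟨hu, hfb⟩ := hNM n hn z hz
    refine (norm_res_le hu hfb).trans ?_
    rw [hM1def]
    nlinarith [hM.le, hC z hz, norm_nonneg z]
  -- Sn converges strongly to T, with bounds
  obtain ⟨B, hB⟩ : ∃ B : ℝ, ∀ n, ‖b n‖ ≤ B := by
    have := hb.norm.bddAbove_range
    obtain ⟨B, hB⟩ := this
    exact ⟨B, fun n => hB (Set.mem_range_self n)⟩
  have hPT : ∀ n, ‖P n * T‖ ≤ ‖T‖ := by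
    intro n
    refine ContinuousLinearMap.opNorm_le_bound _ (norm_nonneg T) fun f => ?_
    rw [ContinuousLinearMap.mul_apply]
    exact (Pnorm hproj n (T f)).trans (T.le_opNorm f)
  have hSbdd : ∀ n, ‖Sn n‖ ≤ B * ‖(1:L2op)‖ + ‖T‖ := by
    intro n
    refine (norm_add_le _ _).trans ?_
    gcongr
    · refine (ContinuousLinearMap.opNorm_smul_le _ _).trans ?_
      gcongr
      exact hB n
    · exact hPT n
  have hSlim : ∀ f : L2, Tendsto (fun n => Sn n f) atTop (𝓝 (T f)) := by
    intro f
    have h1 : Tendsto (fun n => (b n) • f) atTop (𝓝 0) := by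
      have := hb.smul_const f
      simpa using this
    have h2 : Tendsto (fun n => P n (T f)) atTop (𝓝 (T f)) := Ptend hproj htau (T f)
    have := h1.add h2
    rw [zero_add] at this
    refine this.congr fun n => ?_
    simp [hSn, ContinuousLinearMap.add_apply, ContinuousLinearMap.smul_apply,
      ContinuousLinearMap.mul_apply]
  -- every z in Kc is a regular value of T
  have hregT : ∀ z ∈ Kc, IsUnit (1 - z • T) := by
    intro z hz
    refine limit_unit (M := M1) (N := N) (C := B * ‖(1:L2op)‖ + ‖T‖)
      (fun n hn => ⟨(hNM n hn z hz).1, hresb n hn z hz⟩) ?_ hSlim hSbdd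
    intro f
    obtain ⟨g, hgf⟩ := (hKcsub hz).2 f
    refine ⟨f + z • g, ?_⟩
    have hev : (fun n => res (Sn n) z f) =ᶠ[atTop] (fun n => f + z • (fres (Sn n) z f)) := by
      filter_upwards [eventually_gt_atTop N] with n hn
      rw [res_eq_one_add ((hNM n hn z hz).1)]
      simp [ContinuousLinearMap.add_apply, ContinuousLinearMap.smul_apply,
        ContinuousLinearMap.one_apply]
    exact Tendsto.congr' hev.symm (tendsto_const_nhds.add ((hgf.const_smul z)))
  -- continuity of the limit resolvent field, compactness of W
  have hcontres : ContinuousOn (fun z => res T z) Kc := by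
    intro z hz
    have h1 : ContinuousAt (fun z : ℂ => 1 - z • T) z :=
      (continuous_const.sub (continuous_id.smul continuous_const)).continuousAt
    have h2 : ContinuousAt Ring.inverse ((1 : L2op) - z • T) := by
      have := NormedRing.inverse_continuousAt (hregT z hz).unit
      rwa [IsUnit.unit_spec] at this
    have h3 : ContinuousAt ((Ring.inverse : L2op → L2op) ∘ fun z : ℂ => 1 - z • T) z :=
      ContinuousAt.comp h2 h1
    exact h3.continuousWithinAt
  set v : L2 := kt s with hv
  have hW0 : ContinuousOn (fun z => adjoint (res T z) v) Kc := by
    have hadj : Continuous (fun A : L2op => adjoint A v) := by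
      have h1 : Continuous (fun A : L2op => (adjoint A : L2op)) :=
        (ContinuousLinearMap.adjoint (𝕜 := ℂ) (E := L2) (F := L2)).continuous
      exact ((ContinuousLinearMap.apply ℂ L2 v).continuous).comp h1
    exact hadj.comp_continuousOn hcontres
  set W : Set L2 := (fun z => adjoint (res T z) v) '' Kc with hWdef
  have hWc : IsCompact W := hKc.image_of_continuousOn hW0
  obtain ⟨CW0, hCW0⟩ := hWc.isBounded.exists_norm_le
  set CW : ℝ := max CW0 0 with hCWdef
  have hCW : ∀ w ∈ W, ‖w‖ ≤ CW := fun w hw => (hCW0 w hw).trans (le_max_left _ _)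
  have hCWnn : (0:ℝ) ≤ CW := le_max_right _ _
  -- key per-n facts
  have hmain : ∀ n, n > N → ‖b n‖ * C ≤ 1/2 → ∀ lam ∈ Kc,
      IsUnit (1 - (lamn b lam n) • (P n * T)) ∧
      res (P n * T) (lamn b lam n) = ((1:ℂ) - b n * lam) • res (Sn n) lam ∧
      ‖res (P n * T) (lamn b lam n)‖ ≤ 2 * M1 := by
    intro n hn hb2 lam hlam
    have hblam : ‖b n * lam‖ ≤ 1/2 := by
      rw [norm_mul]
      calc ‖b n‖ * ‖lam‖ ≤ ‖b n‖ * C := by gcongr; exact hC lam hlam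
      _ ≤ 1/2 := hb2
    have hclow : (1:ℝ)/2 ≤ ‖(1:ℂ) - b n * lam‖ := by
      have := norm_sub_norm_le (1:ℂ) (b n * lam)
      rw [norm_one] at this
      linarith
    have hchigh : ‖(1:ℂ) - b n * lam‖ ≤ 3/2 := by
      refine (norm_sub_le _ _).trans ?_
      rw [norm_one]
      linarith
    have hcne : (1:ℂ) - b n * lam ≠ 0 := by
      intro h
      rw [h, norm_zero] at hclow
      linarith
    have hfac : 1 - (lamn b lam n) • (P n * T)
        = ((1:ℂ) - b n * lam)⁻¹ • (1 - lam • (Sn n)) := by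
      rw [hSn]
      exact scalar_factor (b n) lam hcne (P n * T)
    have hinvne : ((1:ℂ) - b n * lam)⁻¹ ≠ 0 := inv_ne_zero hcne
    obtain ⟨hu, hinv⟩ := smul_unit_inverse hinvne (hNM n hn lam hlam).1
    rw [← hfac] at hu
    have hreseq : res (P n * T) (lamn b lam n) = ((1:ℂ) - b n * lam) • res (Sn n) lam := by
      rw [res_def', hfac, hinv, inv_inv]
      rfl
    refine ⟨hu, hreseq, ?_⟩
    rw [hreseq]
    refine (ContinuousLinearMap.opNorm_smul_le _ _).trans ?_
    calc ‖(1:ℂ) - b n * lam‖ * ‖res (Sn n) lam‖ ≤ (3/2) * M1 :=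
          mul_le_mul hchigh (hresb n hn lam hlam) (norm_nonneg _) (by norm_num)
    _ ≤ 2 * M1 := by linarith
  have hevb2 : ∀ᶠ n in atTop, ‖b n‖ * C ≤ 1/2 := by
    have h1 : Tendsto (fun n => ‖b n‖ * C) atTop (𝓝 0) := by
      simpa using hb.norm.mul_const C
    filter_upwards [h1.eventually_le_const (by norm_num : (0:ℝ) < 1/2)] with n hn
    exact hn
  constructor
  · filter_upwards [eventually_gt_atTop N, hevb2] with n hn hb2 lam hlam
    exact (hmain n hn hb2 lam hlam).1
  · rw [NormedAddCommGroup.tendsto_nhds_zero]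
    intro ε hε
    set D1 : ℝ := 2 * M1 * ‖T‖ * (2 * C) + 1 with hD1def
    set D2 : ℝ := 2 * M1 * ‖T‖ * (2 * C^2) * CW + 1 with hD2def
    have hD1pos : 0 < D1 := by
      have h1 : (0:ℝ) ≤ 2 * M1 * ‖T‖ * (2 * C) := by positivity
      linarith
    have hD2pos : 0 < D2 := by
      have h1 : (0:ℝ) ≤ 2 * M1 * ‖T‖ * (2 * C^2) * CW := by positivity
      linarith
    have hevP : ∀ᶠ n in atTop, ∀ w ∈ W, ‖P n w - w‖ ≤ ε / (4 * D1) :=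
      Punif hproj htau hWc (by positivity)
    have hbn0 : Tendsto (fun n => ‖b n‖) atTop (𝓝 (0:ℝ)) := by simpa using hb.norm
    have hevb3 : ∀ᶠ n in atTop, ‖b n‖ ≤ ε / (4 * D2) := by
      filter_upwards [hbn0.eventually_le_const (by positivity : (0:ℝ) < ε / (4 * D2))] with n hn
      exact hn
    have hevchi : ∀ᶠ n in atTop, |s| < tau n := htau.eventually (eventually_gt_atTop |s|)
    filter_upwards [eventually_gt_atTop N, hevb2, hevP, hevb3, hevchi] with n hn hb2 hP4 hb4 hchi
    have hterm : ∀ lam ∈ Kc,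
        ‖chi (tau n) s • (adjoint (res (P n * T) (lamn b lam n))) v
          - (adjoint (res T lam)) v‖ ≤ ε/2 := by
      intro lam hlam
      obtain ⟨huB, hreseq, hresbd⟩ := hmain n hn hb2 lam hlam
      have huA := hregT lam hlam
      rw [chi_eq_one hchi, one_smul]
      -- resolvent difference identity
      have hid := res_diff (T1 := T) (T2 := P n * T) (z1 := lam) (z2 := lamn b lam n) huA huB
      have hvec : adjoint (res (P n * T) (lamn b lam n)) v - adjoint (res T lam) v
          = adjoint (res (P n * T) (lamn b lam n))
              ((adjoint ((lamn b lam n) • (P n * T) - lam • T)) (adjoint (res T lam) v)) := by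
        have hop : adjoint (res (P n * T) (lamn b lam n)) - adjoint (res T lam)
            = adjoint (res (P n * T) (lamn b lam n))
              * (adjoint ((lamn b lam n) • (P n * T) - lam • T) * adjoint (res T lam)) := by
          rw [← adj_sub, hid, adj_mul, adj_mul]
        calc adjoint (res (P n * T) (lamn b lam n)) v - adjoint (res T lam) v
            = (adjoint (res (P n * T) (lamn b lam n)) - adjoint (res T lam)) v := by
              rw [ContinuousLinearMap.sub_apply]
        _ = _ := by
              rw [hop]
              simp [ContinuousLinearMap.mul_apply]
      set w : L2 := adjoint (res T lam) v with hwdef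
      have hwW : w ∈ W := Set.mem_image_of_mem _ hlam
      rw [hvec]
      -- bound
      have hE : (adjoint ((lamn b lam n) • (P n * T) - lam • T)) w
          = adjoint T ((starRingEnd ℂ (lamn b lam n)) • (P n w) - (starRingEnd ℂ lam) • w) := by
        rw [adj_sub, adj_smul, adj_smul, adj_mul, Pself hproj n]
        simp only [ContinuousLinearMap.sub_apply, ContinuousLinearMap.smul_apply,
          ContinuousLinearMap.mul_apply]
        rw [map_sub, _root_.map_smul, _root_.map_smul]
      -- scalar estimates
      have hblam : ‖b n * lam‖ ≤ 1/2 := by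
        rw [norm_mul]
        calc ‖b n‖ * ‖lam‖ ≤ ‖b n‖ * C := by gcongr; exact hC lam hlam
        _ ≤ 1/2 := hb2
      have hclow : (1:ℝ)/2 ≤ ‖(1:ℂ) - b n * lam‖ := by
        have := norm_sub_norm_le (1:ℂ) (b n * lam)
        rw [norm_one] at this
        linarith
      have hcne : (1:ℂ) - b n * lam ≠ 0 := by
        intro h
        rw [h, norm_zero] at hclow
        linarith
      have hcinv : ‖((1:ℂ) - b n * lam)⁻¹‖ ≤ 2 := by
        rw [norm_inv]
        rw [inv_le_comm₀ (by linarith) (by norm_num)]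
        linarith
      have hlamn1 : ‖lamn b lam n‖ ≤ 2 * C := by
        rw [lamn, norm_mul]
        calc ‖lam‖ * ‖((1:ℂ) - b n * lam)⁻¹‖ ≤ C * 2 :=
              mul_le_mul (hC lam hlam) hcinv (norm_nonneg _) hCpos.le
        _ = 2 * C := by ring
      have hlamn2 : ‖lamn b lam n - lam‖ ≤ 2 * C^2 * ‖b n‖ := by
        have heq : lamn b lam n - lam = lam * (((1:ℂ) - b n * lam)⁻¹ * (b n * lam)) := by
          rw [lamn]
          linear_combination lam * mul_inv_cancel₀ hcne
        rw [heq, norm_mul, norm_mul]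
        calc ‖lam‖ * (‖((1:ℂ) - b n * lam)⁻¹‖ * ‖b n * lam‖)
            ≤ C * (2 * (‖b n‖ * C)) := by
              rw [norm_mul]
              have hi1 : ‖b n‖ * ‖lam‖ ≤ ‖b n‖ * C :=
                mul_le_mul_of_nonneg_left (hC lam hlam) (norm_nonneg _)
              have hi2 : ‖((1:ℂ) - b n * lam)⁻¹‖ * (‖b n‖ * ‖lam‖) ≤ 2 * (‖b n‖ * C) :=
                mul_le_mul hcinv hi1 (by positivity) (by norm_num)
              exact mul_le_mul (hC lam hlam) hi2 (by positivity) hCpos.le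
        _ = 2 * C^2 * ‖b n‖ := by ring
      -- vector estimate
      have hvbound : ‖(starRingEnd ℂ (lamn b lam n)) • (P n w) - (starRingEnd ℂ lam) • w‖
          ≤ 2 * C * (ε / (4 * D1)) + 2 * C^2 * ‖b n‖ * CW := by
        have hsplit : (starRingEnd ℂ (lamn b lam n)) • (P n w) - (starRingEnd ℂ lam) • w
            = (starRingEnd ℂ (lamn b lam n)) • (P n w - w)
              + ((starRingEnd ℂ (lamn b lam n)) - (starRingEnd ℂ lam)) • w := by
          rw [smul_sub, sub_smul]
          abel
        rw [hsplit]
        refine (norm_add_le _ _).trans ?_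
        have h1 : ‖(starRingEnd ℂ (lamn b lam n)) • (P n w - w)‖ ≤ 2 * C * (ε / (4 * D1)) := by
          rw [norm_smul, RCLike.norm_conj]
          have := hP4 w hwW
          gcongr
        have h2 : ‖((starRingEnd ℂ (lamn b lam n)) - (starRingEnd ℂ lam)) • w‖
            ≤ 2 * C^2 * ‖b n‖ * CW := by
          rw [norm_smul, ← map_sub, RCLike.norm_conj]
          have := hCW w hwW
          calc ‖lamn b lam n - lam‖ * ‖w‖ ≤ (2 * C^2 * ‖b n‖) * CW := by
                gcongr
          _ = 2 * C^2 * ‖b n‖ * CW := by ring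
        linarith
      calc ‖adjoint (res (P n * T) (lamn b lam n))
              ((adjoint ((lamn b lam n) • (P n * T) - lam • T)) w)‖
          ≤ ‖adjoint (res (P n * T) (lamn b lam n))‖
            * ‖(adjoint ((lamn b lam n) • (P n * T) - lam • T)) w‖ :=
            ContinuousLinearMap.le_opNorm _ _
      _ ≤ (2 * M1) * (‖T‖ * (2 * C * (ε / (4 * D1)) + 2 * C^2 * ‖b n‖ * CW)) := by
            rw [adj_norm]
            refine mul_le_mul hresbd ?_ (norm_nonneg _) (by linarith)
            rw [hE]
            refine (ContinuousLinearMap.le_opNorm _ _).trans ?_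
            rw [adj_norm]
            exact mul_le_mul_of_nonneg_left hvbound (norm_nonneg T)
      _ ≤ ε/4 + ε/4 := by
            have hexp : (2 * M1) * (‖T‖ * (2 * C * (ε / (4 * D1)) + 2 * C^2 * ‖b n‖ * CW))
                = (2 * M1 * ‖T‖ * (2 * C)) * (ε / (4 * D1))
                  + (2 * M1 * ‖T‖ * (2 * C^2)) * (‖b n‖ * CW) := by ring
            rw [hexp]
            have hp1 : (2 * M1 * ‖T‖ * (2 * C)) * (ε / (4 * D1)) ≤ ε/4 := by
              have h1 : (2 * M1 * ‖T‖ * (2 * C)) ≤ D1 := by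
                rw [hD1def]; linarith
              calc (2 * M1 * ‖T‖ * (2 * C)) * (ε / (4 * D1)) ≤ D1 * (ε / (4 * D1)) := by
                    gcongr
              _ = ε/4 := by field_simp
            have hp2 : (2 * M1 * ‖T‖ * (2 * C^2)) * (‖b n‖ * CW) ≤ ε/4 := by
              have h1 : (2 * M1 * ‖T‖ * (2 * C^2)) * (‖b n‖ * CW)
                  = (2 * M1 * ‖T‖ * (2 * C^2) * CW) * ‖b n‖ := by ring
              rw [h1]
              have h2 : (2 * M1 * ‖T‖ * (2 * C^2) * CW) ≤ D2 := by
                rw [hD2def]; linarith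
              calc (2 * M1 * ‖T‖ * (2 * C^2) * CW) * ‖b n‖ ≤ D2 * (ε / (4 * D2)) :=
                    mul_le_mul h2 hb4 (norm_nonneg _) hD2pos.le
              _ = ε/4 := by field_simp
            linarith
      _ ≤ ε/2 := by linarith
    -- from the pointwise bound to the sup
    have hsup_le : (⨆ lam ∈ Kc,
        ‖chi (tau n) s • (adjoint (res (P n * T) (lamn b lam n))) v
          - (adjoint (res T lam)) v‖) ≤ ε/2 := by
      refine Real.iSup_le (fun lam => Real.iSup_le (fun hlam => hterm lam hlam) (by linarith)) (by linarith)
    have hsup_nonneg : (0:ℝ) ≤ ⨆ lam ∈ Kc,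
        ‖chi (tau n) s • (adjoint (res (P n * T) (lamn b lam n))) v
          - (adjoint (res T lam)) v‖ :=
      Real.iSup_nonneg fun lam => Real.iSup_nonneg fun _ => norm_nonneg _
    rw [Real.norm_eq_abs, abs_of_nonneg hsup_nonneg]
    linarith
end
end
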